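/- arXiv:1801.01924 — 5 statements merged into one kernel-verified Lean document; each statement's English description precedes it below -/
import Mathlib

section
/- Theorem 3.3. Assume the block Jacobi operator J is self-adjoint and bounded from below, that ker A_m = {0} for all m ∈ ℕ, and let b ∈ ℝ be such that there exists a compact self-adjoint operator K₀ on H with ⟨(J−K₀)u,u⟩ ≥ b‖u‖² for all u ∈ dom J (i.e. the essential spectrum of J lies in [b,∞)). Fix δ > 0 and ε ∈ (0,1), and let λ < b be a real eigenvalue of J with eigenvector u ∈ dom J, Ju = λu, normalized so that ‖u‖ = 1. Then there is a constant C, independent of m, such that for all m ∈ ℕ: ‖u_m‖_K ≤ C·exp(−γ(λ)·Σ_{k=1}^{m−1} φ_δ(‖A_k‖_{B(K)})). -/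
noncomputable section

open scoped InnerProductSpace ENNReal

/-- The function `ψ(x) = x² eˣ`. -/
def psiFun (x : ℝ) : ℝ := x ^ 2 * Real.exp x

/-- The inverse function of `ψ` on `[0,∞)`. -/
def psiInv (t : ℝ) : ℝ := sInf {x : ℝ | 0 ≤ x ∧ psiFun x = t}

/-- The function `φ_δ`: `1/√δ` on `[0,δ)` and `1/√x` on `[δ,∞)`. -/
def phiFun (δ x : ℝ) : ℝ := if x < δ then 1 / Real.sqrt δ else 1 / Real.sqrt x

/-- `γ(λ) = √δ · ψ⁻¹((b − Re λ)(1−ε)/δ)`. -/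
def gammaFun (δ ε b relam : ℝ) : ℝ := Real.sqrt δ * psiInv ((b - relam) * (1 - ε) / δ)

variable {K : Type*} [NormedAddCommGroup K] [InnerProductSpace ℂ K] [CompleteSpace K]

/-- A sequence in `ℓ²(ℕ,K)` is finitely supported. -/
def IsFinSupp (u : lp (fun _ : ℕ => K) 2) : Prop := Set.Finite {n | u n ≠ 0}

/-- The formal block Jacobi action (indices starting at `0`):
`(Υu)₀ = B₀u₀ + A₀u₁` and `(Υu)_{k+1} = A*_k u_k + B_{k+1} u_{k+1} + A_{k+1} u_{k+2}`. -/
def jacApply (A B : ℕ → K →L[ℂ] K) (v : ℕ → K) : ℕ → K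
  | 0 => B 0 (v 0) + A 0 (v 1)
  | k + 1 =>
      ContinuousLinearMap.adjoint (A k) (v k) + B (k + 1) (v (k + 1)) + A (k + 1) (v (k + 2))

/-- `J` is the block Jacobi operator with entries `A`, `B`: every finitely supported sequence
belongs to its domain, it acts on those by the block Jacobi difference expression, and it is
the closure of its restriction to the finitely supported sequences (i.e. its graph is contained
in the closure of the graph of `J₀`). -/
structure IsBlockJacobi (J : lp (fun _ : ℕ => K) 2 →ₗ.[ℂ] lp (fun _ : ℕ => K) 2)
    (A B : ℕ → K →L[ℂ] K) : Prop where
  dom_fin : ∀ u : lp (fun _ : ℕ => K) 2, IsFinSupp u → u ∈ J.domain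
  apply_fin : ∀ (u : lp (fun _ : ℕ => K) 2) (hu : u ∈ J.domain), IsFinSupp u →
    ∀ n, (J ⟨u, hu⟩) n = jacApply A B (fun m => u m) n
  isClosure : ∀ u : J.domain, ((u : lp (fun _ : ℕ => K) 2), J u) ∈
    closure {p : lp (fun _ : ℕ => K) 2 × lp (fun _ : ℕ => K) 2 |
      ∃ h1 : p.1 ∈ J.domain, IsFinSupp p.1 ∧ J ⟨p.1, h1⟩ = p.2}

/-- `R` is an everywhere-defined bounded inverse of `J − λI`; the existence of such an `R`
says precisely that `λ ∉ σ(J)`. -/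
def IsResolventAt (J : lp (fun _ : ℕ => K) 2 →ₗ.[ℂ] lp (fun _ : ℕ => K) 2) (lam : ℂ)
    (R : lp (fun _ : ℕ => K) 2 →L[ℂ] lp (fun _ : ℕ => K) 2) : Prop :=
  (∀ u : J.domain, R (J u - lam • (u : lp (fun _ : ℕ => K) 2)) = u) ∧
  (∀ v : lp (fun _ : ℕ => K) 2, ∃ hv : R v ∈ J.domain, J ⟨R v, hv⟩ - lam • (R v) = v)

/-- `J` is bounded from below. -/
def IsBoundedBelowOp (J : lp (fun _ : ℕ => K) 2 →ₗ.[ℂ] lp (fun _ : ℕ => K) 2) : Prop :=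
  ∃ c : ℝ, ∀ u : J.domain,
    c * ‖(u : lp (fun _ : ℕ => K) 2)‖ ^ 2 ≤ (⟪J u, (u : lp (fun _ : ℕ => K) 2)⟫_ℂ).re

/-- The essential spectrum of `J` lies in `[b,∞)`: there is a compact self-adjoint operator `K₀`
with `⟨(J−K₀)u,u⟩ ≥ b‖u‖²` on the domain of `J`. -/
def EssSpecFrom (J : lp (fun _ : ℕ => K) 2 →ₗ.[ℂ] lp (fun _ : ℕ => K) 2) (b : ℝ) : Prop :=
  ∃ K₀ : lp (fun _ : ℕ => K) 2 →L[ℂ] lp (fun _ : ℕ => K) 2,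
    IsCompactOperator K₀ ∧ IsSelfAdjoint K₀ ∧
    ∀ u : J.domain, b * ‖(u : lp (fun _ : ℕ => K) 2)‖ ^ 2 ≤
      (⟪J u - K₀ (u : lp (fun _ : ℕ => K) 2), (u : lp (fun _ : ℕ => K) 2)⟫_ℂ).re

set_option linter.unusedSectionVars false
set_option maxHeartbeats 1000000

open Filter

/-! ### Auxiliary facts about `psiFun`, `psiInv`, `phiFun`, `gammaFun` -/

lemma psiInv_spec {q : ℝ} (hq : 0 ≤ q) : 0 ≤ psiInv q ∧ psiFun (psiInv q) = q := by
  have hcont : Continuous psiFun := by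
    unfold psiFun; continuity
  set R : ℝ := max 1 q with hR
  have hR1 : (1:ℝ) ≤ R := le_max_left _ _
  have hRq : q ≤ R := le_max_right _ _
  have hψR : q ≤ psiFun R := by
    have h1 : R ≤ R ^ 2 := by nlinarith
    have h2 : R ^ 2 ≤ R ^ 2 * Real.exp R := by
      nlinarith [Real.one_le_exp (by linarith : (0:ℝ) ≤ R), sq_nonneg R]
    unfold psiFun; nlinarith
  have hψ0 : psiFun 0 = 0 := by simp [psiFun]
  have hmem0 : q ∈ Set.Icc (psiFun 0) (psiFun R) := ⟨by simpa [hψ0], hψR⟩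
  obtain ⟨x, hx, hxq⟩ := intermediate_value_Icc (by linarith : (0:ℝ) ≤ R)
    hcont.continuousOn hmem0
  have hne : ({x : ℝ | 0 ≤ x ∧ psiFun x = q}).Nonempty := ⟨x, hx.1, hxq⟩
  have hbdd : BddBelow {x : ℝ | 0 ≤ x ∧ psiFun x = q} := ⟨0, fun y hy => hy.1⟩
  have hclosed : IsClosed {x : ℝ | 0 ≤ x ∧ psiFun x = q} := by
    have : {x : ℝ | 0 ≤ x ∧ psiFun x = q} = Set.Ici 0 ∩ psiFun ⁻¹' {q} := by
      ext y; simp [Set.mem_Ici]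
    rw [this]
    exact isClosed_Ici.inter (isClosed_singleton.preimage hcont)
  have hmem := hclosed.csInf_mem hne hbdd
  exact ⟨hmem.1, hmem.2⟩

lemma phiFun_nonneg {δ x : ℝ} : 0 ≤ phiFun δ x := by
  unfold phiFun; split <;> positivity

lemma gammaFun_nonneg {δ ε b lam : ℝ} (hδ : 0 < δ) (hε : ε ∈ Set.Ioo (0:ℝ) 1) (hlam : lam < b) :
    0 ≤ gammaFun δ ε b lam := by
  have hq : 0 ≤ (b - lam) * (1 - ε) / δ :=
    div_nonneg (mul_nonneg (by linarith) (by linarith [hε.2])) hδ.le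
  exact mul_nonneg (Real.sqrt_nonneg _) (psiInv_spec hq).1

lemma key_ineq {δ ε b lam : ℝ} (hδ : 0 < δ) (hε : ε ∈ Set.Ioo (0:ℝ) 1) (hlam : lam < b)
    {x s : ℝ} (hx : 0 ≤ x) (hs0 : 0 ≤ s) (hs : s ≤ gammaFun δ ε b lam * phiFun δ x) :
    x * (Real.exp s - 1)^2 ≤ ((1 - ε) * (b - lam)) * Real.exp s := by
  set q : ℝ := (b - lam) * (1 - ε) / δ with hqdef
  have hq : 0 ≤ q :=
    div_nonneg (mul_nonneg (by linarith) (by linarith [hε.2])) hδ.le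
  obtain ⟨ht0, hψ⟩ := psiInv_spec hq
  set t₀ : ℝ := psiInv q with ht₀def
  have hM : δ * (t₀^2 * Real.exp t₀) = (1 - ε) * (b - lam) := by
    have h' : psiFun t₀ = q := hψ
    unfold psiFun at h'
    rw [hqdef] at h'
    field_simp at h'
    nlinarith [h']
  set g : ℝ := gammaFun δ ε b lam * phiFun δ x with hgdef
  have hstar : x * g^2 * Real.exp g ≤ (1 - ε) * (b - lam) := by
    rw [hgdef]
    unfold gammaFun phiFun
    rw [show (b - lam) * (1 - ε) / δ = q from rfl, ← ht₀def]
    split_ifs with h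
    · have h1 : Real.sqrt δ * t₀ * (1 / Real.sqrt δ) = t₀ := by
        field_simp
      rw [h1, ← hM]
      have : x * (t₀^2 * Real.exp t₀) ≤ δ * (t₀^2 * Real.exp t₀) :=
        mul_le_mul_of_nonneg_right h.le (by positivity)
      linarith [this, mul_assoc x (t₀^2) (Real.exp t₀)]
    · push_neg at h
      have hxpos : 0 < x := lt_of_lt_of_le hδ h
      have hsx : Real.sqrt δ ≤ Real.sqrt x := Real.sqrt_le_sqrt h
      have hx2 : Real.sqrt x ^ 2 = x := Real.sq_sqrt hxpos.le
      have hd2 : Real.sqrt δ ^ 2 = δ := Real.sq_sqrt hδ.le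
      have h2 : x * (Real.sqrt δ * t₀ * (1 / Real.sqrt x))^2 = δ * t₀^2 := by
        field_simp
        rw [hx2, hd2]; ring
      have h3 : Real.sqrt δ * t₀ * (1 / Real.sqrt x) ≤ t₀ := by
        rw [mul_one_div, div_le_iff₀ (by positivity)]
        nlinarith [hsx]
      have h4 : Real.exp (Real.sqrt δ * t₀ * (1 / Real.sqrt x)) ≤ Real.exp t₀ :=
        Real.exp_le_exp.2 h3
      rw [h2, ← hM]
      have : δ * t₀^2 * Real.exp (Real.sqrt δ * t₀ * (1 / Real.sqrt x))
          ≤ δ * t₀^2 * Real.exp t₀ :=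
        mul_le_mul_of_nonneg_left h4 (by positivity)
      linarith [this, mul_assoc δ (t₀^2) (Real.exp t₀)]
  have hg0 : 0 ≤ g := le_trans hs0 hs
  have hmono : x * s^2 * Real.exp s ≤ (1 - ε) * (b - lam) := by
    refine le_trans ?_ hstar
    have h1 : x * s^2 ≤ x * g^2 := by
      apply mul_le_mul_of_nonneg_left _ hx
      nlinarith
    exact mul_le_mul h1 (Real.exp_le_exp.2 hs) (Real.exp_pos s).le
      (mul_nonneg hx (sq_nonneg _))
  have h5 : Real.exp (-s) * Real.exp s = 1 := by rw [← Real.exp_add]; simp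
  have hes : Real.exp s - 1 ≤ s * Real.exp s := by
    nlinarith [mul_le_mul_of_nonneg_right (Real.add_one_le_exp (-s)) (Real.exp_pos s).le, h5]
  have hes0 : 0 ≤ Real.exp s - 1 := by nlinarith [Real.add_one_le_exp s]
  have h4 : (Real.exp s - 1)^2 ≤ s^2 * Real.exp s * Real.exp s := by nlinarith
  have h6 : x * (Real.exp s - 1)^2 ≤ x * s^2 * Real.exp s * Real.exp s := by
    have := mul_le_mul_of_nonneg_left h4 hx
    nlinarith [this]
  have h7 : x * s^2 * Real.exp s * Real.exp s ≤ ((1 - ε) * (b - lam)) * Real.exp s :=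
    mul_le_mul_of_nonneg_right hmono (Real.exp_pos s).le
  linarith

/-! ### Weighted multiplication operators on `ℓ²` -/

lemma weight_sum_le {c : ℕ → ℝ} {M : ℝ} (hM : ∀ n, |c n| ≤ M) (u : lp (fun _ : ℕ => K) 2)
    (s : Finset ℕ) :
    ∑ i ∈ s, ‖(c i : ℂ) • u i‖ ^ (2:ℝ≥0∞).toReal ≤ (M * ‖u‖) ^ (2:ℝ≥0∞).toReal := by
  have hM0 : 0 ≤ M := le_trans (abs_nonneg _) (hM 0)
  have h2 : (2:ℝ≥0∞).toReal = (2:ℝ) := by norm_num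
  rw [h2]
  calc ∑ i ∈ s, ‖(c i : ℂ) • u i‖ ^ (2:ℝ)
      ≤ ∑ i ∈ s, (M * ‖u i‖) ^ (2:ℝ) := by
        apply Finset.sum_le_sum
        intro i _
        apply Real.rpow_le_rpow (norm_nonneg _) ?_ (by norm_num)
        rw [norm_smul, Complex.norm_real]
        exact mul_le_mul_of_nonneg_right (hM i) (norm_nonneg _)
    _ = ∑ i ∈ s, M ^ (2:ℝ) * ‖u i‖ ^ (2:ℝ) := by
        refine Finset.sum_congr rfl fun i _ => ?_
        rw [Real.mul_rpow hM0 (norm_nonneg _)]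
    _ = M ^ (2:ℝ) * ∑ i ∈ s, ‖u i‖ ^ (2:ℝ) := by rw [Finset.mul_sum]
    _ ≤ M ^ (2:ℝ) * ‖u‖ ^ (2:ℝ) := by
        apply mul_le_mul_of_nonneg_left _ (Real.rpow_nonneg hM0 _)
        have := lp.sum_rpow_le_norm_rpow (p := 2) (by norm_num) u s
        rwa [h2] at this
    _ = (M * ‖u‖) ^ (2:ℝ) := (Real.mul_rpow hM0 (norm_nonneg _)).symm

lemma memℓp_weight {c : ℕ → ℝ} {M : ℝ} (hM : ∀ n, |c n| ≤ M) (u : lp (fun _ : ℕ => K) 2) :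
    Memℓp (fun n => (c n : ℂ) • u n) 2 :=
  memℓp_gen' (weight_sum_le hM u)

/-- Multiplication by the bounded real sequence `c` on `ℓ²(ℕ, K)`. -/
def wt (c : ℕ → ℝ) {M : ℝ} (hM : ∀ n, |c n| ≤ M) (u : lp (fun _ : ℕ => K) 2) :
    lp (fun _ : ℕ => K) 2 := ⟨fun n => (c n : ℂ) • u n, memℓp_weight hM u⟩

@[simp] lemma wt_apply (c : ℕ → ℝ) {M : ℝ} (hM : ∀ n, |c n| ≤ M)
    (u : lp (fun _ : ℕ => K) 2) (n : ℕ) : wt c hM u n = (c n : ℂ) • u n := rfl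

lemma norm_wt_le (c : ℕ → ℝ) {M : ℝ} (hM : ∀ n, |c n| ≤ M) (u : lp (fun _ : ℕ => K) 2) :
    ‖wt c hM u‖ ≤ M * ‖u‖ := by
  have hM0 : 0 ≤ M := le_trans (abs_nonneg _) (hM 0)
  exact lp.norm_le_of_forall_sum_le (by norm_num) (by positivity)
    (fun s => weight_sum_le hM u s)

lemma wt_sub (c : ℕ → ℝ) {M : ℝ} (hM : ∀ n, |c n| ≤ M) (u v : lp (fun _ : ℕ => K) 2) :
    wt c hM u - wt c hM v = wt c hM (u - v) := by
  ext n
  simp only [lp.coeFn_sub, Pi.sub_apply, wt_apply, smul_sub]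

lemma wt_tendsto (c : ℕ → ℝ) {M : ℝ} (hM : ∀ n, |c n| ≤ M)
    {f : ℕ → lp (fun _ : ℕ => K) 2} {u : lp (fun _ : ℕ => K) 2}
    (hf : Tendsto f atTop (nhds u)) :
    Tendsto (fun j => wt c hM (f j)) atTop (nhds (wt c hM u)) := by
  have hM0 : 0 ≤ M := le_trans (abs_nonneg _) (hM 0)
  rw [tendsto_iff_norm_sub_tendsto_zero] at hf ⊢
  apply squeeze_zero (fun j => norm_nonneg _) (g := fun j => M * ‖f j - u‖)
  · intro j
    rw [wt_sub]
    exact norm_wt_le c hM _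
  · simpa using hf.const_mul M

/-! ### Coordinate sums and weak convergence helpers -/

lemma sum_sq_coord_le (v : lp (fun _ : ℕ => K) 2) (s : Finset ℕ) :
    ∑ i ∈ s, ‖v i‖ ^ 2 ≤ ‖v‖ ^ 2 := by
  have h := lp.sum_rpow_le_norm_rpow (p := 2) (by norm_num) v s
  have h2 : (2:ℝ≥0∞).toReal = (2:ℝ) := by norm_num
  rw [h2] at h
  calc ∑ i ∈ s, ‖v i‖ ^ 2 = ∑ i ∈ s, ‖v i‖ ^ (2:ℝ) := by
        refine Finset.sum_congr rfl fun i _ => ?_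
        rw [← Real.rpow_natCast ‖v i‖ 2]; norm_num
    _ ≤ ‖v‖ ^ (2:ℝ) := h
    _ = ‖v‖ ^ 2 := by rw [← Real.rpow_natCast ‖v‖ 2]; norm_num

lemma weak_null {z : ℕ → lp (fun _ : ℕ => K) 2} (hzb : ∀ j, ‖z j‖ ≤ 1)
    (hz0 : ∀ m, Tendsto (fun j => ‖z j m‖) atTop (nhds 0))
    (y : lp (fun _ : ℕ => K) 2) :
    Tendsto (fun j => ⟪y, z j⟫_ℂ) atTop (nhds 0) := by
  classical
  rw [NormedAddCommGroup.tendsto_nhds_zero]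
  intro e he
  have hsum := lp.hasSum_single (E := fun _ : ℕ => K) (p := 2) (by norm_num) y
  rw [HasSum, Metric.tendsto_nhds] at hsum
  obtain ⟨s, hs⟩ := (hsum (e/2) (by positivity)).exists
  set ys : lp (fun _ : ℕ => K) 2 := ∑ i ∈ s, lp.single 2 i (y i) with hys
  have hys_close : ‖y - ys‖ < e/2 := by
    rw [← dist_eq_norm, dist_comm]; exact hs
  have hterm : Tendsto (fun j => ∑ i ∈ s, ⟪y i, z j i⟫_ℂ) atTop (nhds 0) := by
    have h0 : Tendsto (fun j => ∑ i ∈ s, ⟪y i, z j i⟫_ℂ) atTop (nhds (∑ i ∈ s, (0:ℂ))) := by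
      apply tendsto_finset_sum
      intro i _
      have hzi : Tendsto (fun j => z j i) atTop (nhds (0:K)) :=
        tendsto_zero_iff_norm_tendsto_zero.2 (hz0 i)
      simpa using (Filter.Tendsto.inner (tendsto_const_nhds (x := y i)) hzi)
    simpa using h0
  rw [NormedAddCommGroup.tendsto_nhds_zero] at hterm
  filter_upwards [hterm (e/2) (by positivity)] with j hj
  have hysz : ⟪ys, z j⟫_ℂ = ∑ i ∈ s, ⟪y i, z j i⟫_ℂ := by
    rw [hys, sum_inner]
    exact Finset.sum_congr rfl fun i _ => lp.inner_single_left i (y i) (z j)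
  have hsplit : ⟪y, z j⟫_ℂ = ⟪y - ys, z j⟫_ℂ + ⟪ys, z j⟫_ℂ := by
    rw [← inner_add_left, sub_add_cancel]
  rw [hsplit]
  calc ‖⟪y - ys, z j⟫_ℂ + ⟪ys, z j⟫_ℂ‖ ≤ ‖⟪y - ys, z j⟫_ℂ‖ + ‖⟪ys, z j⟫_ℂ‖ := norm_add_le _ _
    _ ≤ ‖y - ys‖ * ‖z j‖ + ‖∑ i ∈ s, ⟪y i, z j i⟫_ℂ‖ := by
        rw [hysz]; gcongr; exact norm_inner_le_norm _ _
    _ < e := by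
        have h1 : ‖y - ys‖ * ‖z j‖ ≤ ‖y - ys‖ * 1 :=
          mul_le_mul_of_nonneg_left (hzb j) (norm_nonneg _)
        nlinarith [norm_nonneg (y - ys)]

lemma finsupp_bound {w : lp (fun _ : ℕ => K) 2} (h : Set.Finite {n | w n ≠ 0}) :
    ∃ N, ∀ k, N ≤ k → w k = 0 := by
  refine ⟨h.toFinset.sup id + 1, fun k hk => ?_⟩
  by_contra hne
  have hmem : k ∈ h.toFinset := h.mem_toFinset.2 hne
  have := Finset.le_sup (f := id) hmem
  simp only [id] at this
  omega

/-! ### The summation-by-parts identity -/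

lemma formExpand (A B : ℕ → K →L[ℂ] K) (v g : ℕ → K) (N : ℕ)
    (hv : ∀ k, N ≤ k → v k = 0) :
    ∑' k, ⟪jacApply A B v k, g k⟫_ℂ =
      ∑ k ∈ Finset.range N, ⟪B k (v k), g k⟫_ℂ
      + ∑ k ∈ Finset.range N, ⟪A k (v (k+1)), g k⟫_ℂ
      + ∑ k ∈ Finset.range N, ⟪v k, A k (g (k+1))⟫_ℂ := by
  have hvanish : ∀ k ∉ Finset.range (N + 2), ⟪jacApply A B v k, g k⟫_ℂ = 0 := by
    intro k hk
    rw [Finset.mem_range, not_lt] at hk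
    obtain ⟨k', rfl⟩ : ∃ k', k = k' + 1 := ⟨k - 1, by omega⟩
    have h1 : v k' = 0 := hv _ (by omega)
    have h2 : v (k' + 1) = 0 := hv _ (by omega)
    have h3 : v (k' + 2) = 0 := hv _ (by omega)
    simp [jacApply, h1, h2, h3]
  rw [tsum_eq_sum hvanish]
  have peel : ∀ f : ℕ → ℂ, ∑ k ∈ Finset.range (N+2), f k
      = (∑ k ∈ Finset.range (N+1), f (k+1)) + f 0 :=
    fun f => Finset.sum_range_succ' f (N+1)
  rw [peel]
  have hjac0 : ⟪jacApply A B v 0, g 0⟫_ℂ = ⟪B 0 (v 0), g 0⟫_ℂ + ⟪A 0 (v 1), g 0⟫_ℂ := by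
    simp [jacApply, inner_add_left]
  have hjacS : ∀ k, ⟪jacApply A B v (k + 1), g (k + 1)⟫_ℂ =
      ⟪v k, A k (g (k + 1))⟫_ℂ + ⟪B (k+1) (v (k+1)), g (k+1)⟫_ℂ
        + ⟪A (k+1) (v (k+1+1)), g (k+1)⟫_ℂ := by
    intro k
    simp only [jacApply, inner_add_left]
    rw [ContinuousLinearMap.adjoint_inner_left]
  simp only [hjacS, hjac0]
  rw [Finset.sum_add_distrib, Finset.sum_add_distrib]
  have hB : ∑ k ∈ Finset.range (N+1), ⟪B (k+1) (v (k+1)), g (k+1)⟫_ℂ + ⟪B 0 (v 0), g 0⟫_ℂ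
      = ∑ k ∈ Finset.range N, ⟪B k (v k), g k⟫_ℂ := by
    rw [← peel (fun k => ⟪B k (v k), g k⟫_ℂ)]
    rw [Finset.sum_range_succ, Finset.sum_range_succ]
    have h1 : v N = 0 := hv _ le_rfl
    have h2 : v (N+1) = 0 := hv _ (by omega)
    simp [h1, h2]
  have hA : ∑ k ∈ Finset.range (N+1), ⟪A (k+1) (v (k+1+1)), g (k+1)⟫_ℂ
      + ⟪A 0 (v (0+1)), g 0⟫_ℂ
      = ∑ k ∈ Finset.range N, ⟪A k (v (k+1)), g k⟫_ℂ := by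
    rw [← peel (fun k => ⟪A k (v (k+1)), g k⟫_ℂ)]
    rw [Finset.sum_range_succ, Finset.sum_range_succ]
    have h1 : v (N+1) = 0 := hv _ (by omega)
    have h2 : v (N+1+1) = 0 := hv _ (by omega)
    simp [h1, h2]
  have hAd : ∑ k ∈ Finset.range (N+1), ⟪v k, A k (g (k+1))⟫_ℂ
      = ∑ k ∈ Finset.range N, ⟪v k, A k (g (k+1))⟫_ℂ := by
    rw [Finset.sum_range_succ]
    have h1 : v N = 0 := hv _ le_rfl
    simp [h1]
  have hA' : ⟪A 0 (v (0+1)), g 0⟫_ℂ = ⟪A 0 (v 1), g 0⟫_ℂ := by norm_num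
  rw [hA'] at hA
  linear_combination hB + hA + hAd

/-- **Theorem 3.3.** Decay of eigenvectors of a semi-bounded self-adjoint block Jacobi operator
corresponding to an eigenvalue `λ < b` below the essential spectrum. -/
theorem eigenvector_decay_unbounded_gap
    (A B : ℕ → K →L[ℂ] K) (hB : ∀ n, IsSelfAdjoint (B n))
    (hkerA : ∀ m, ∀ x : K, A m x = 0 → x = 0)
    (J : lp (fun _ : ℕ => K) 2 →ₗ.[ℂ] lp (fun _ : ℕ => K) 2)
    (hJ : IsBlockJacobi J A B) (hsa : IsSelfAdjoint J)
    (hbelow : IsBoundedBelowOp J)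
    (b : ℝ) (hess : EssSpecFrom J b)
    (δ : ℝ) (hδ : 0 < δ) (ε : ℝ) (hε : ε ∈ Set.Ioo (0 : ℝ) 1)
    (lam : ℝ) (hlam : lam < b)
    (u : J.domain) (hu : J u = (lam : ℂ) • (u : lp (fun _ : ℕ => K) 2))
    (hnorm : ‖(u : lp (fun _ : ℕ => K) 2)‖ = 1) :
    ∃ C : ℝ, ∀ m : ℕ,
      ‖(u : lp (fun _ : ℕ => K) 2) m‖ ≤
        C * Real.exp (-(gammaFun δ ε b lam) *
            ∑ k ∈ Finset.range m, phiFun δ ‖A k‖) := by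
  classical
  obtain ⟨K₀, hK₀c, hK₀sa, hK₀⟩ := hess
  set uu : lp (fun _ : ℕ => K) 2 := (u : lp (fun _ : ℕ => K) 2) with huu
  set γ : ℝ := gammaFun δ ε b lam with hγ
  have hγ0 : 0 ≤ γ := gammaFun_nonneg hδ hε hlam
  set M : ℝ := (1 - ε) * (b - lam) with hMdef
  have hM0 : 0 ≤ M := mul_nonneg (by linarith [hε.2]) (by linarith)
  set F : ℕ → ℝ := fun m => γ * ∑ k ∈ Finset.range m, phiFun δ ‖A k‖ with hF
  have hFstep : ∀ m, F (m+1) - F m = γ * phiFun δ ‖A m‖ := by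
    intro m; simp only [hF, Finset.sum_range_succ]; ring
  have hF0 : ∀ m, 0 ≤ F m :=
    fun m => mul_nonneg hγ0 (Finset.sum_nonneg fun k _ => phiFun_nonneg)
  have hFmono : ∀ m, F m ≤ F (m+1) := by
    intro m
    have h1 := hFstep m
    have h2 : 0 ≤ γ * phiFun δ ‖A m‖ := mul_nonneg hγ0 phiFun_nonneg
    linarith
  -- the (truncated) weights
  set c : ℕ → ℕ → ℝ := fun n m => Real.exp (min (F m) (n:ℝ)) with hc
  have hcb : ∀ n m, |c n m| ≤ Real.exp (n:ℝ) := by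
    intro n m
    rw [abs_of_pos (Real.exp_pos _)]
    exact Real.exp_le_exp.2 (min_le_right _ _)
  have hcb2 : ∀ n m, |c n m ^ 2| ≤ Real.exp (n:ℝ) ^ 2 := by
    intro n m
    rw [abs_of_pos (by positivity)]
    have := hcb n m
    rw [abs_of_pos (Real.exp_pos _)] at this
    nlinarith [Real.exp_pos (min (F m) (n:ℝ))]
  have hcpos : ∀ n m, 0 < c n m := fun n m => Real.exp_pos _
  -- the key pointwise inequality for the weights
  have hkey : ∀ n k, (c n (k+1) - c n k)^2 * ‖A k‖ ≤ M * (c n k * c n (k+1)) := by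
    intro n k
    set s : ℝ := min (F (k+1)) (n:ℝ) - min (F k) (n:ℝ) with hs
    have hs0 : 0 ≤ s := by
      have : min (F k) (n:ℝ) ≤ min (F (k+1)) (n:ℝ) := min_le_min (hFmono k) le_rfl
      simp only [hs]; linarith
    have hsle : s ≤ γ * phiFun δ ‖A k‖ := by
      rcases le_total (F k) (n:ℝ) with h | h
      · have e1 : min (F k) (n:ℝ) = F k := min_eq_left h
        have e2 : min (F (k+1)) (n:ℝ) ≤ F (k+1) := min_le_left _ _
        rw [hs, e1]
        linarith [hFstep k]
      · have e1 : min (F k) (n:ℝ) = (n:ℝ) := min_eq_right h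
        have e2 : min (F (k+1)) (n:ℝ) ≤ (n:ℝ) := min_le_right _ _
        rw [hs, e1]
        have := mul_nonneg hγ0 (phiFun_nonneg (δ := δ) (x := ‖A k‖))
        linarith
    have hrel : c n (k+1) = c n k * Real.exp s := by
      simp only [hc, ← Real.exp_add, hs]
      congr 1
      ring
    have hk1 := key_ineq hδ hε hlam (norm_nonneg (A k)) hs0 (by rw [← hγ]; exact hsle)
    calc (c n (k+1) - c n k)^2 * ‖A k‖
        = (c n k)^2 * (‖A k‖ * (Real.exp s - 1)^2) := by rw [hrel]; ring
      _ ≤ (c n k)^2 * (M * Real.exp s) := by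
          apply mul_le_mul_of_nonneg_left _ (sq_nonneg _)
          rw [hMdef]; exact hk1
      _ = M * (c n k * (c n k * Real.exp s)) := by ring
      _ = M * (c n k * c n (k+1)) := by rw [← hrel]
  -- Step 1: the core inequality for each truncation level n
  have claim1 : ∀ n : ℕ, ε * (b - lam) * ‖wt (c n) (hcb n) uu‖^2 ≤
      -(⟪K₀ (wt (c n) (hcb n) uu), wt (c n) (hcb n) uu⟫_ℂ).re := by
    intro n
    set W : lp (fun _ : ℕ => K) 2 → lp (fun _ : ℕ => K) 2 :=
      fun w => wt (c n) (hcb n) w with hW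
    set W2 : lp (fun _ : ℕ => K) 2 → lp (fun _ : ℕ => K) 2 :=
      fun w => wt (fun m => c n m ^ 2) (hcb2 n) w with hW2
    have hclos := hJ.isClosure u
    rw [hu, mem_closure_iff_seq_limit] at hclos
    obtain ⟨p, hpS, hplim⟩ := hclos
    have hineq : ∀ j, b * ‖W (p j).1‖^2 + (⟪K₀ (W (p j).1), W (p j).1⟫_ℂ).re
        ≤ (⟪(p j).2, W2 (p j).1⟫_ℂ).re + M * ‖W (p j).1‖^2 := by
      intro j
      obtain ⟨hdom, hfin, hJp⟩ := hpS j
      set w : lp (fun _ : ℕ => K) 2 := (p j).1 with hwdef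
      obtain ⟨N, hN⟩ := finsupp_bound hfin
      have hWfin : IsFinSupp (W w) := by
        apply hfin.subset
        intro m hm
        simp only [Set.mem_setOf_eq, hW, wt_apply] at hm ⊢
        intro h0
        exact hm (by rw [h0, smul_zero])
      have hWdom := hJ.dom_fin _ hWfin
      have hWN : ∀ k, N ≤ k → (c n k : ℂ) • w k = 0 :=
        fun k hk => by rw [hN k hk, smul_zero]
      -- expansion of the two inner products
      have hJW : ⟪J ⟨W w, hWdom⟩, W w⟫_ℂ
          = ∑ k ∈ Finset.range N, ⟪B k ((c n k : ℂ) • w k), (c n k : ℂ) • w k⟫_ℂ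
          + ∑ k ∈ Finset.range N, ⟪A k ((c n (k+1) : ℂ) • w (k+1)), (c n k : ℂ) • w k⟫_ℂ
          + ∑ k ∈ Finset.range N, ⟪(c n k : ℂ) • w k, A k ((c n (k+1) : ℂ) • w (k+1))⟫_ℂ := by
        rw [lp.inner_eq_tsum,
          ← formExpand A B (fun m => (c n m : ℂ) • w m) (fun m => (c n m : ℂ) • w m) N hWN]
        exact tsum_congr fun k => by rw [hJ.apply_fin _ hWdom hWfin]; rfl
      have hYW : ⟪(p j).2, W2 w⟫_ℂ
          = ∑ k ∈ Finset.range N, ⟪B k (w k), ((c n k ^ 2 : ℝ) : ℂ) • w k⟫_ℂ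
          + ∑ k ∈ Finset.range N, ⟪A k (w (k+1)), ((c n k ^ 2 : ℝ) : ℂ) • w k⟫_ℂ
          + ∑ k ∈ Finset.range N, ⟪w k, A k (((c n (k+1) ^ 2 : ℝ) : ℂ) • w (k+1))⟫_ℂ := by
        rw [lp.inner_eq_tsum,
          ← formExpand A B (fun m => w m) (fun m => ((c n m ^ 2 : ℝ) : ℂ) • w m) N hN]
        exact tsum_congr fun k => by rw [← hJp, hJ.apply_fin _ hdom hfin]; rfl
      -- real parts
      set rr : ℕ → ℝ := fun k => (⟪A k (w (k+1)), w k⟫_ℂ).re with hrr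
      have hsw : ∀ k, (⟪w k, A k (w (k+1))⟫_ℂ).re = rr k := by
        intro k
        rw [← inner_conj_symm, Complex.conj_re]
      have hXre : (⟪J ⟨W w, hWdom⟩, W w⟫_ℂ).re
          = (∑ k ∈ Finset.range N, (c n k)^2 * (⟪B k (w k), w k⟫_ℂ).re)
          + (∑ k ∈ Finset.range N, (c n k * c n (k+1)) * rr k)
          + (∑ k ∈ Finset.range N, (c n k * c n (k+1)) * rr k) := by
        rw [hJW, Complex.add_re, Complex.add_re, Complex.re_sum, Complex.re_sum,
          Complex.re_sum]
        congr 1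
        congr 1
        · refine Finset.sum_congr rfl fun k _ => ?_
          rw [map_smul, inner_smul_left, inner_smul_right, Complex.conj_ofReal,
            ← mul_assoc, ← Complex.ofReal_mul, Complex.re_ofReal_mul]
          ring
        · refine Finset.sum_congr rfl fun k _ => ?_
          rw [map_smul, inner_smul_left, inner_smul_right, Complex.conj_ofReal,
            ← mul_assoc, ← Complex.ofReal_mul, Complex.re_ofReal_mul, hrr]
          ring
        · refine Finset.sum_congr rfl fun k _ => ?_
          rw [map_smul, inner_smul_left, inner_smul_right, Complex.conj_ofReal,
            ← mul_assoc, ← Complex.ofReal_mul, Complex.re_ofReal_mul]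
          rw [hsw k]
      have hYre : (⟪(p j).2, W2 w⟫_ℂ).re
          = (∑ k ∈ Finset.range N, (c n k)^2 * (⟪B k (w k), w k⟫_ℂ).re)
          + (∑ k ∈ Finset.range N, (c n k)^2 * rr k)
          + (∑ k ∈ Finset.range N, (c n (k+1))^2 * rr k) := by
        rw [hYW, Complex.add_re, Complex.add_re, Complex.re_sum, Complex.re_sum,
          Complex.re_sum]
        congr 1
        congr 1
        · refine Finset.sum_congr rfl fun k _ => ?_
          rw [inner_smul_right, Complex.re_ofReal_mul]
        · refine Finset.sum_congr rfl fun k _ => ?_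
          rw [inner_smul_right, Complex.re_ofReal_mul, hrr]
        · refine Finset.sum_congr rfl fun k _ => ?_
          rw [map_smul, inner_smul_right, Complex.re_ofReal_mul, hsw k]
      -- the summation-by-parts identity for real parts
      have hXY : (⟪J ⟨W w, hWdom⟩, W w⟫_ℂ).re
          = (⟪(p j).2, W2 w⟫_ℂ).re
            - ∑ k ∈ Finset.range N, (c n (k+1) - c n k)^2 * rr k := by
        rw [hXre, hYre]
        have e2 : ∑ k ∈ Finset.range N, ((c n k * c n (k+1)) * rr k)
            + ∑ k ∈ Finset.range N, ((c n k * c n (k+1)) * rr k)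
            = (∑ k ∈ Finset.range N, (c n k)^2 * rr k
              + ∑ k ∈ Finset.range N, (c n (k+1))^2 * rr k)
              - ∑ k ∈ Finset.range N, (c n (k+1) - c n k)^2 * rr k := by
          rw [← Finset.sum_add_distrib, ← Finset.sum_add_distrib, ← Finset.sum_sub_distrib]
          exact Finset.sum_congr rfl fun k _ => by ring
        linarith [e2]
      -- bounding the error term
      have habs : ∀ k, |rr k| ≤ ‖A k‖ * (‖w (k+1)‖ * ‖w k‖) := by
        intro k
        calc |rr k| ≤ ‖⟪A k (w (k+1)), w k⟫_ℂ‖ := by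
              rw [hrr]; exact Complex.abs_re_le_norm _
          _ ≤ ‖A k (w (k+1))‖ * ‖w k‖ := norm_inner_le_norm _ _
          _ ≤ ‖A k‖ * ‖w (k+1)‖ * ‖w k‖ :=
              mul_le_mul_of_nonneg_right ((A k).le_opNorm _) (norm_nonneg _)
          _ = ‖A k‖ * (‖w (k+1)‖ * ‖w k‖) := by ring
      have hcoordW : ∀ k, ‖(W w) k‖ = c n k * ‖w k‖ := by
        intro k
        simp only [hW, wt_apply]
        rw [norm_smul, Complex.norm_real, Real.norm_eq_abs, abs_of_pos (hcpos n k)]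
      have hsum1 : ∑ k ∈ Finset.range N, (c n k * ‖w k‖)^2 ≤ ‖W w‖^2 := by
        have := sum_sq_coord_le (W w) (Finset.range N)
        refine le_trans (le_of_eq ?_) this
        exact Finset.sum_congr rfl fun k _ => by rw [hcoordW k]
      have hsum2 : ∑ k ∈ Finset.range N, (c n (k+1) * ‖w (k+1)‖)^2 ≤ ‖W w‖^2 := by
        have h0 : ∑ k ∈ Finset.range N, (c n (k+1) * ‖w (k+1)‖)^2
            ≤ ∑ k ∈ Finset.range (N+1), (c n k * ‖w k‖)^2 := by
          rw [Finset.sum_range_succ' (fun k => (c n k * ‖w k‖)^2) N]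
          have : (0:ℝ) ≤ (c n 0 * ‖w 0‖)^2 := sq_nonneg _
          linarith
        refine le_trans h0 ?_
        have := sum_sq_coord_le (W w) (Finset.range (N+1))
        refine le_trans (le_of_eq ?_) this
        exact Finset.sum_congr rfl fun k _ => by rw [hcoordW k]
      have hbound : -(∑ k ∈ Finset.range N, (c n (k+1) - c n k)^2 * rr k) ≤ M * ‖W w‖^2 := by
        have h1 : -(∑ k ∈ Finset.range N, (c n (k+1) - c n k)^2 * rr k)
            ≤ ∑ k ∈ Finset.range N, (c n (k+1) - c n k)^2 * |rr k| := by
          rw [← Finset.sum_neg_distrib]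
          apply Finset.sum_le_sum
          intro k _
          rw [← mul_neg]
          exact mul_le_mul_of_nonneg_left (neg_le_abs _) (sq_nonneg _)
        refine le_trans h1 ?_
        have h2 : ∑ k ∈ Finset.range N, (c n (k+1) - c n k)^2 * |rr k|
            ≤ ∑ k ∈ Finset.range N, M * ((c n k * ‖w k‖) * (c n (k+1) * ‖w (k+1)‖)) := by
          apply Finset.sum_le_sum
          intro k _
          calc (c n (k+1) - c n k)^2 * |rr k|
              ≤ (c n (k+1) - c n k)^2 * (‖A k‖ * (‖w (k+1)‖ * ‖w k‖)) :=
                mul_le_mul_of_nonneg_left (habs k) (sq_nonneg _)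
            _ = ((c n (k+1) - c n k)^2 * ‖A k‖) * (‖w (k+1)‖ * ‖w k‖) := by ring
            _ ≤ (M * (c n k * c n (k+1))) * (‖w (k+1)‖ * ‖w k‖) :=
                mul_le_mul_of_nonneg_right (hkey n k) (by positivity)
            _ = M * ((c n k * ‖w k‖) * (c n (k+1) * ‖w (k+1)‖)) := by ring
        refine le_trans h2 ?_
        have h3 : ∑ k ∈ Finset.range N, M * ((c n k * ‖w k‖) * (c n (k+1) * ‖w (k+1)‖))
            ≤ ∑ k ∈ Finset.range N,
              (M/2) * ((c n k * ‖w k‖)^2 + (c n (k+1) * ‖w (k+1)‖)^2) := by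
          apply Finset.sum_le_sum
          intro k _
          nlinarith [sq_nonneg (c n k * ‖w k‖ - c n (k+1) * ‖w (k+1)‖), hM0]
        refine le_trans h3 ?_
        rw [← Finset.mul_sum, Finset.sum_add_distrib]
        have := add_le_add hsum1 hsum2
        calc (M/2) * (∑ k ∈ Finset.range N, (c n k * ‖w k‖)^2
              + ∑ k ∈ Finset.range N, (c n (k+1) * ‖w (k+1)‖)^2)
            ≤ (M/2) * (‖W w‖^2 + ‖W w‖^2) := by
              apply mul_le_mul_of_nonneg_left this (by positivity)
          _ = M * ‖W w‖^2 := by ring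
      -- the semiboundedness estimate
      have hessW := hK₀ ⟨W w, hWdom⟩
      rw [inner_sub_left, Complex.sub_re] at hessW
      -- combine
      have hXle : (⟪J ⟨W w, hWdom⟩, W w⟫_ℂ).re
          ≤ (⟪(p j).2, W2 w⟫_ℂ).re + M * ‖W w‖^2 := by
        rw [hXY]
        linarith [hbound]
      calc b * ‖W w‖^2 + (⟪K₀ (W w), W w⟫_ℂ).re
          ≤ (⟪J ⟨W w, hWdom⟩, W w⟫_ℂ).re := by linarith [hessW]
        _ ≤ (⟪(p j).2, W2 w⟫_ℂ).re + M * ‖W w‖^2 := hXle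
    -- pass to the limit j → ∞
    have hw1 : Tendsto (fun j => (p j).1) atTop (nhds uu) :=
      (continuous_fst.tendsto _).comp hplim
    have hw2 : Tendsto (fun j => (p j).2) atTop (nhds ((lam:ℂ) • uu)) :=
      (continuous_snd.tendsto _).comp hplim
    have hWlim : Tendsto (fun j => W (p j).1) atTop (nhds (W uu)) := wt_tendsto _ _ hw1
    have hW2lim : Tendsto (fun j => W2 (p j).1) atTop (nhds (W2 uu)) := wt_tendsto _ _ hw1
    have hL : Tendsto (fun j => b * ‖W (p j).1‖^2 + (⟪K₀ (W (p j).1), W (p j).1⟫_ℂ).re)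
        atTop (nhds (b * ‖W uu‖^2 + (⟪K₀ (W uu), W uu⟫_ℂ).re)) := by
      apply Filter.Tendsto.add
      · exact (hWlim.norm.pow 2).const_mul b
      · exact (Complex.continuous_re.tendsto _).comp
          (((K₀.continuous.tendsto _).comp hWlim).inner hWlim)
    have hR : Tendsto (fun j => (⟪(p j).2, W2 (p j).1⟫_ℂ).re + M * ‖W (p j).1‖^2)
        atTop (nhds ((⟪(lam:ℂ) • uu, W2 uu⟫_ℂ).re + M * ‖W uu‖^2)) := by
      apply Filter.Tendsto.add
      · exact (Complex.continuous_re.tendsto _).comp (hw2.inner hW2lim)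
      · exact (hWlim.norm.pow 2).const_mul M
    have hfinal := le_of_tendsto_of_tendsto' hL hR hineq
    have hWW : (⟪(lam:ℂ) • uu, W2 uu⟫_ℂ).re = lam * ‖W uu‖^2 := by
      rw [inner_smul_left, Complex.conj_ofReal, Complex.re_ofReal_mul]
      congr 1
      have h1 : ⟪uu, W2 uu⟫_ℂ = ⟪W uu, W uu⟫_ℂ := by
        rw [lp.inner_eq_tsum, lp.inner_eq_tsum]
        apply tsum_congr; intro k
        simp only [hW, hW2, wt_apply]
        rw [inner_smul_left, inner_smul_right, inner_smul_right, Complex.conj_ofReal]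
        push_cast
        ring
      rw [h1]
      exact (by exact_mod_cast (norm_sq_eq_re_inner (𝕜 := ℂ) (W uu)) : ‖W uu‖^2
        = (⟪W uu, W uu⟫_ℂ).re).symm
    rw [hWW] at hfinal
    have hrw : ε * (b - lam) = b - lam - M := by rw [hMdef]; ring
    have hgoal : ε * (b - lam) * ‖W uu‖^2 ≤ -(⟪K₀ (W uu), W uu⟫_ℂ).re := by
      rw [hrw]
      nlinarith [hfinal]
    exact hgoal
  -- Step 2: the weighted norms are uniformly bounded
  have claim2 : ∃ C : ℝ, ∀ n : ℕ, ‖wt (c n) (hcb n) uu‖ ≤ C := by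
    by_contra hcon
    push_neg at hcon
    choose f hf using fun j : ℕ => hcon ((j:ℝ) + 1)
    set v : ℕ → lp (fun _ : ℕ => K) 2 := fun j => wt (c (f j)) (hcb (f j)) uu with hv
    have hvpos : ∀ j, 0 < ‖v j‖ := fun j => lt_of_le_of_lt (by positivity) (hf j)
    set z : ℕ → lp (fun _ : ℕ => K) 2 := fun j => ((‖v j‖⁻¹ : ℝ) : ℂ) • v j with hz
    have hz1 : ∀ j, ‖z j‖ = 1 := by
      intro j
      simp only [hz]
      rw [norm_smul, Complex.norm_real, Real.norm_eq_abs,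
        abs_of_pos (inv_pos.2 (hvpos j)), inv_mul_cancel₀ (hvpos j).ne']
    have hzcoord : ∀ m, Tendsto (fun j => ‖z j m‖) atTop (nhds 0) := by
      intro m
      apply squeeze_zero (fun j => norm_nonneg _)
        (g := fun j : ℕ => Real.exp (F m) * ‖uu m‖ * ((j:ℝ)+1)⁻¹)
      · intro j
        have hco : ‖z j m‖ = ‖v j‖⁻¹ * (c (f j) m * ‖uu m‖) := by
          simp only [hz, lp.coeFn_smul, Pi.smul_apply, hv, wt_apply]
          rw [norm_smul, norm_smul, Complex.norm_real, Complex.norm_real,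
            Real.norm_eq_abs, Real.norm_eq_abs,
            abs_of_pos (inv_pos.2 (hvpos j)), abs_of_pos (hcpos _ m)]
        rw [hco]
        have h1 : c (f j) m ≤ Real.exp (F m) := Real.exp_le_exp.2 (min_le_left _ _)
        have h2 : ‖v j‖⁻¹ ≤ ((j:ℝ)+1)⁻¹ := by
          apply inv_anti₀ (by positivity) (hf j).le
        calc ‖v j‖⁻¹ * (c (f j) m * ‖uu m‖)
            ≤ ((j:ℝ)+1)⁻¹ * (Real.exp (F m) * ‖uu m‖) := by
              apply mul_le_mul h2 (mul_le_mul_of_nonneg_right h1 (norm_nonneg _))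
                (by positivity) (by positivity)
          _ = Real.exp (F m) * ‖uu m‖ * ((j:ℝ)+1)⁻¹ := by ring
      · have hto : Tendsto (fun j : ℕ => ((j:ℝ)+1)⁻¹) atTop (nhds 0) := by
          exact tendsto_one_div_add_atTop_nhds_zero_nat.congr (fun j => one_div _)
        simpa [mul_assoc] using hto.const_mul (Real.exp (F m) * ‖uu m‖)
    have hlow : ∀ j, ε * (b - lam) ≤ -(⟪K₀ (z j), z j⟫_ℂ).re := by
      intro j
      have h1 := claim1 (f j)
      have hinner : ⟪K₀ (z j), z j⟫_ℂ = ((‖v j‖⁻¹ ^ 2 : ℝ) : ℂ) * ⟪K₀ (v j), v j⟫_ℂ := by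
        simp only [hz, map_smul, inner_smul_left, inner_smul_right, Complex.conj_ofReal]
        push_cast
        ring
      have hre : (⟪K₀ (z j), z j⟫_ℂ).re = ‖v j‖⁻¹^2 * (⟪K₀ (v j), v j⟫_ℂ).re := by
        rw [hinner, Complex.re_ofReal_mul]
      rw [hre]
      have h3 : ‖v j‖⁻¹^2 * (ε * (b - lam) * ‖v j‖^2)
          ≤ ‖v j‖⁻¹^2 * (-(⟪K₀ (v j), v j⟫_ℂ).re) :=
        mul_le_mul_of_nonneg_left h1 (by positivity)
      have h4 : ‖v j‖⁻¹^2 * ‖v j‖^2 = 1 := by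
        rw [← mul_pow, inv_mul_cancel₀ (hvpos j).ne', one_pow]
      nlinarith [h3, h4]
    obtain ⟨S, hScomp, hSnhds⟩ := hK₀c
    obtain ⟨r, hr, hball⟩ := Metric.mem_nhds_iff.1 hSnhds
    have hmem : ∀ j, K₀ (((r/2 : ℝ) : ℂ) • z j) ∈ S := by
      intro j
      apply hball
      rw [Metric.mem_ball, dist_zero_right, norm_smul, Complex.norm_real, Real.norm_eq_abs,
        abs_of_pos (by positivity : (0:ℝ) < r/2), hz1 j]
      linarith
    obtain ⟨a, haS, φ, hφ, hconv⟩ := hScomp.tendsto_subseq hmem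
    set y₀ : lp (fun _ : ℕ => K) 2 := ((2/r : ℝ) : ℂ) • a with hy₀
    have hKz : Tendsto (fun j => K₀ (z (φ j))) atTop (nhds y₀) := by
      have h5 : ∀ w : lp (fun _ : ℕ => K) 2,
          K₀ w = ((2/r : ℝ) : ℂ) • K₀ (((r/2 : ℝ) : ℂ) • w) := by
        intro w
        have hone : ((2/r : ℝ) : ℂ) * ((r/2 : ℝ) : ℂ) = 1 := by
          rw [← Complex.ofReal_mul, show (2/r) * (r/2) = 1 by field_simp,
            Complex.ofReal_one]
        rw [map_smul, smul_smul, hone, one_smul]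
      exact Filter.Tendsto.congr (fun j => (h5 (z (φ j))).symm)
        (hconv.const_smul (((2/r : ℝ) : ℂ)))
    have hwn := (weak_null (fun j => (hz1 j).le) hzcoord y₀).comp hφ.tendsto_atTop
    have hfirst : Tendsto (fun j => ⟪K₀ (z (φ j)) - y₀, z (φ j)⟫_ℂ) atTop (nhds 0) := by
      refine squeeze_zero_norm (fun j => ?_) (tendsto_iff_norm_sub_tendsto_zero.1 hKz)
      · calc ‖⟪K₀ (z (φ j)) - y₀, z (φ j)⟫_ℂ‖ ≤ ‖K₀ (z (φ j)) - y₀‖ * ‖z (φ j)‖ :=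
              norm_inner_le_norm _ _
          _ = ‖K₀ (z (φ j)) - y₀‖ := by rw [hz1]; ring
    have hq : Tendsto (fun j => ⟪K₀ (z (φ j)), z (φ j)⟫_ℂ) atTop (nhds 0) := by
      have hsum := hfirst.add hwn
      have heq : ∀ j, ⟪K₀ (z (φ j)) - y₀, z (φ j)⟫_ℂ + ⟪y₀, z (φ j)⟫_ℂ
          = ⟪K₀ (z (φ j)), z (φ j)⟫_ℂ := by
        intro j; rw [← inner_add_left, sub_add_cancel]
      have hsum' := hsum.congr heq
      simpa using hsum'
    have hqre : Tendsto (fun j => -(⟪K₀ (z (φ j)), z (φ j)⟫_ℂ).re) atTop (nhds 0) := by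
      have h6 := (Complex.continuous_re.tendsto 0).comp hq
      simpa using h6.neg
    have hle : ε * (b - lam) ≤ 0 :=
      ge_of_tendsto hqre (Filter.Eventually.of_forall fun j => hlow (φ j))
    have hpos : 0 < ε * (b - lam) := mul_pos hε.1 (by linarith)
    linarith
  -- Step 3: conclusion
  obtain ⟨C, hC⟩ := claim2
  refine ⟨C, fun m => ?_⟩
  set n : ℕ := ⌈F m⌉₊ with hn
  have hFn : F m ≤ (n:ℝ) := Nat.le_ceil _
  have hcoord : ‖(wt (c n) (hcb n) uu) m‖ = Real.exp (F m) * ‖uu m‖ := by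
    rw [wt_apply, norm_smul, Complex.norm_real, Real.norm_eq_abs, abs_of_pos (hcpos n m)]
    simp only [hc, min_eq_left hFn]
  have h1 : Real.exp (F m) * ‖uu m‖ ≤ C := by
    rw [← hcoord]
    exact le_trans (lp.norm_apply_le_norm (by norm_num) _ m) (hC n)
  have h2 : ‖uu m‖ ≤ C * Real.exp (-(F m)) := by
    have he := Real.exp_pos (F m)
    rw [Real.exp_neg, ← div_eq_mul_inv, le_div_iff₀ he]
    nlinarith [h1]
  calc ‖uu m‖ ≤ C * Real.exp (-(F m)) := h2
    _ = C * Real.exp (-(gammaFun δ ε b lam) * ∑ k ∈ Finset.range m, phiFun δ ‖A k‖) := by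
        rw [hF, hγ]; ring_nf
end
end

section
/- Corollary 3.4(b). Assume the block Jacobi operator J is self-adjoint and bounded from below, that ‖A_k‖_{B(K)} → ∞ as k → ∞, that ker A_k = {0} for every k ∈ ℕ, and let b ∈ ℝ be such that there exists a compact self-adjoint operator K₀ on H with ⟨(J−K₀)u,u⟩ ≥ b‖u‖² for all u ∈ dom J (i.e. the essential spectrum of J lies in [b,∞)). Fix ε ∈ (0,1). If λ < b is a real eigenvalue of J with eigenvector u ∈ dom J, Ju = λu, normalized so that ‖u‖ = 1, then there is a constant C_b, independent of m, such that ‖u_m‖_K ≤ C_b·exp(−(1−ε)·√(b−λ)·Σ_{k=1}^{m−1} 1/√(‖A_k‖_{B(K)})) for all m ∈ ℕ. -/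
noncomputable section

open scoped InnerProductSpace ENNReal

variable {K : Type*} [NormedAddCommGroup K] [InnerProductSpace ℂ K] [CompleteSpace K]

/-! ### Auxiliary material for the proof -/

set_option linter.unusedSectionVars false
set_option maxHeartbeats 2000000

section Aux

abbrev Hsp (K : Type*) [NormedAddCommGroup K] [InnerProductSpace ℂ K] :=
  lp (fun _ : ℕ => K) 2

/-- evaluation as a continuous linear map -/
def evalCLM (n : ℕ) : Hsp K →L[ℂ] K :=
  LinearMap.mkContinuous
    { toFun := fun f => f n
      map_add' := fun f g => rfl
      map_smul' := fun c f => rfl }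
    1 (fun f => by rw [one_mul]; exact lp.norm_apply_le_norm two_ne_zero f n)

@[simp] lemma evalCLM_apply (n : ℕ) (f : Hsp K) : evalCLM n f = f n := rfl

lemma continuous_jacApply (A B : ℕ → K →L[ℂ] K) (n : ℕ) :
    Continuous (fun f : Hsp K => jacApply A B (fun m => f m) n) := by
  cases n with
  | zero =>
    simp only [jacApply]
    exact ((B 0).continuous.comp (evalCLM (K := K) 0).continuous).add
      ((A 0).continuous.comp (evalCLM (K := K) 1).continuous)
  | succ k =>
    simp only [jacApply]
    exact (((ContinuousLinearMap.adjoint (A k)).continuous.comp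
        (evalCLM (K := K) k).continuous).add
      ((B (k+1)).continuous.comp (evalCLM (K := K) (k+1)).continuous)).add
      ((A (k+1)).continuous.comp (evalCLM (K := K) (k+2)).continuous)

lemma jac_component {J : lp (fun _ : ℕ => K) 2 →ₗ.[ℂ] lp (fun _ : ℕ => K) 2}
    {A B : ℕ → K →L[ℂ] K} (hJ : IsBlockJacobi J A B) (u : J.domain) (n : ℕ) :
    (J u) n = jacApply A B (fun m => (u : lp (fun _ : ℕ => K) 2) m) n := by
  have hmem := hJ.isClosure u
  have hsub : {p : lp (fun _ : ℕ => K) 2 × lp (fun _ : ℕ => K) 2 |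
      ∃ h1 : p.1 ∈ J.domain, IsFinSupp p.1 ∧ J ⟨p.1, h1⟩ = p.2} ⊆
      {p : lp (fun _ : ℕ => K) 2 × lp (fun _ : ℕ => K) 2 |
        p.2 n = jacApply A B (fun m => p.1 m) n} := by
    rintro ⟨p1, p2⟩ ⟨h1, hfin, happ⟩
    rw [show p2 = J ⟨p1, h1⟩ from happ.symm]
    exact hJ.apply_fin p1 h1 hfin n
  have hclosed : IsClosed {p : lp (fun _ : ℕ => K) 2 × lp (fun _ : ℕ => K) 2 |
      p.2 n = jacApply A B (fun m => p.1 m) n} := by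
    apply isClosed_eq
    · exact (evalCLM (K := K) n).continuous.comp continuous_snd
    · exact (continuous_jacApply A B n).comp continuous_fst
  exact closure_minimal hsub hclosed hmem

lemma re_inner_rsmul_left (c : ℝ) (x y : K) :
    (⟪(c : ℂ) • x, y⟫_ℂ).re = c * (⟪x, y⟫_ℂ).re := by
  rw [inner_smul_left]; simp [Complex.conj_ofReal]

lemma re_inner_rsmul_right (c : ℝ) (x y : K) :
    (⟪x, (c : ℂ) • y⟫_ℂ).re = c * (⟪x, y⟫_ℂ).re := by
  rw [inner_smul_right]; simp

/-- commutator sequence -/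
def jacF (A : ℕ → K →L[ℂ] K) (x : ℕ → K) (w : ℕ → ℝ) : ℕ → K
  | 0 => ((w 1 - w 0 : ℝ) : ℂ) • A 0 (x 1)
  | k + 1 => ((w k - w (k+1) : ℝ) : ℂ) • ContinuousLinearMap.adjoint (A k) (x k) +
      ((w (k+2) - w (k+1) : ℝ) : ℂ) • A (k+1) (x (k+2))

lemma key_identity (A : ℕ → K →L[ℂ] K) (x : ℕ → K) (w : ℕ → ℝ) (N : ℕ) :
    ∑ n ∈ Finset.range (N+1), (⟪jacF A x w n, ((w n : ℝ) : ℂ) • x n⟫_ℂ).re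
      = -(∑ k ∈ Finset.range N, (w (k+1) - w k)^2 * (⟪A k (x (k+1)), x k⟫_ℂ).re)
        + (w (N+1) - w N) * w N * (⟪A N (x (N+1)), x N⟫_ℂ).re := by
  induction N with
  | zero =>
    simp only [Finset.range_one, Finset.sum_singleton, Finset.range_zero, Finset.sum_empty,
      neg_zero, zero_add, jacF]
    rw [re_inner_rsmul_left, re_inner_rsmul_right]; ring
  | succ N ih =>
    rw [Finset.sum_range_succ, ih, Finset.sum_range_succ]
    have hadj : (⟪ContinuousLinearMap.adjoint (A N) (x N), x (N+1)⟫_ℂ).re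
        = (⟪A N (x (N+1)), x N⟫_ℂ).re := by
      rw [ContinuousLinearMap.adjoint_inner_left]
      simpa using inner_re_symm (𝕜 := ℂ) (x N) ((A N) (x (N+1)))
    simp only [jacF, inner_add_left]
    rw [Complex.add_re, re_inner_rsmul_left, re_inner_rsmul_left,
      re_inner_rsmul_right, re_inner_rsmul_right, hadj]
    ring

lemma sum_single_apply (f : ℕ → K) (N j : ℕ) :
    (∑ i ∈ Finset.range N, lp.single 2 i (f i) : Hsp K) j = if j < N then f j else 0 := by
  have h : (∑ i ∈ Finset.range N, lp.single 2 i (f i) : Hsp K) j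
      = ∑ i ∈ Finset.range N, (lp.single 2 i (f i) : Hsp K) j := by
    rw [lp.coeFn_sum]; simp
  rw [h]
  by_cases hj : j < N
  · rw [if_pos hj, Finset.sum_eq_single_of_mem j (Finset.mem_range.2 hj)]
    · rw [lp.single_apply_self]
    · intro i _ hij; exact lp.single_apply_ne 2 i _ (Ne.symm hij)
  · rw [if_neg hj, Finset.sum_eq_zero]
    intro i hi
    have hi' := Finset.mem_range.1 hi
    exact lp.single_apply_ne 2 i _ (by omega : j ≠ i)

/-- head truncation -/
def Ppart (M : ℕ) (y : Hsp K) : Hsp K := ∑ i ∈ Finset.range M, lp.single 2 i (y i)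

/-- tail -/
def Qtail (M : ℕ) (y : Hsp K) : Hsp K := y - Ppart M y

lemma Ppart_apply (M : ℕ) (y : Hsp K) (j : ℕ) :
    (Ppart M y) j = if j < M then y j else 0 :=
  sum_single_apply (fun i => y i) M j

lemma Ppart_add_Qtail (M : ℕ) (y : Hsp K) : Ppart M y + Qtail M y = y := by
  rw [Qtail]; abel

lemma Qtail_apply (M : ℕ) (y : Hsp K) (j : ℕ) :
    (Qtail M y) j = if j < M then 0 else y j := by
  have h1 : (Qtail M y) j = y j - (Ppart M y) j := by rw [Qtail, lp.coeFn_sub]; rfl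
  rw [h1, Ppart_apply]
  by_cases h : j < M <;> simp [h]

lemma Qtail_smul (M : ℕ) (c : ℂ) (y : Hsp K) : Qtail M (c • y) = c • Qtail M y := by
  apply lp.ext; funext j
  have h1 : (c • Qtail M y) j = c • (Qtail M y) j := by rw [lp.coeFn_smul]; rfl
  rw [Qtail_apply, h1, Qtail_apply]
  have h2 : (c • y) j = c • y j := by rw [lp.coeFn_smul]; rfl
  by_cases h : j < M <;> simp [h, h2]

lemma hasSum_norm_sq (y : Hsp K) : HasSum (fun i => ‖y i‖ ^ 2) (‖y‖ ^ 2) := by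
  have h := lp.hasSum_norm (p := 2) (E := fun _ : ℕ => K) (by norm_num) y
  have h2 : ((2 : ℝ≥0∞).toReal) = ((2 : ℕ) : ℝ) := by norm_num
  rw [h2] at h
  simp only [Real.rpow_natCast] at h
  exact h

lemma norm_Qtail_sq (M : ℕ) (y : Hsp K) :
    ‖Qtail M y‖ ^ 2 = ‖y‖ ^ 2 - ∑ i ∈ Finset.range M, ‖y i‖ ^ 2 := by
  have h := lp.norm_compl_sum_single (p := 2) (E := fun _ : ℕ => K) (by norm_num) y
    (Finset.range M)
  have h2 : ((2 : ℝ≥0∞).toReal) = (2 : ℝ) := by norm_num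
  rw [h2] at h
  have h3 : ∀ x : ℝ, 0 ≤ x → x ^ (2 : ℝ) = x ^ 2 := fun x hx => by
    rw [show (2:ℝ) = ((2:ℕ):ℝ) by norm_num, Real.rpow_natCast]
  rw [h3 _ (norm_nonneg _), h3 _ (norm_nonneg _)] at h
  rw [Qtail, Ppart, h]
  congr 1
  exact Finset.sum_congr rfl fun i _ => h3 _ (norm_nonneg _)

lemma norm_Qtail_le (M : ℕ) (y : Hsp K) : ‖Qtail M y‖ ≤ ‖y‖ := by
  have h := norm_Qtail_sq M y
  have h2 : ‖Qtail M y‖ ^ 2 ≤ ‖y‖ ^ 2 := by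
    rw [h]
    have : (0:ℝ) ≤ ∑ i ∈ Finset.range M, ‖y i‖ ^ 2 :=
      Finset.sum_nonneg fun i _ => sq_nonneg _
    linarith
  nlinarith [norm_nonneg (Qtail M y), norm_nonneg y]

lemma norm_Qtail_mono {M M' : ℕ} (h : M ≤ M') (y : Hsp K) :
    ‖Qtail M' y‖ ≤ ‖Qtail M y‖ := by
  have h1 := norm_Qtail_sq M y
  have h2 := norm_Qtail_sq M' y
  have h3 : ∑ i ∈ Finset.range M, ‖y i‖ ^ 2 ≤ ∑ i ∈ Finset.range M', ‖y i‖ ^ 2 :=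
    Finset.sum_le_sum_of_subset_of_nonneg (Finset.range_subset_range.2 h)
      (fun i _ _ => sq_nonneg _)
  have h4 : ‖Qtail M' y‖ ^ 2 ≤ ‖Qtail M y‖ ^ 2 := by rw [h1, h2]; linarith
  nlinarith [norm_nonneg (Qtail M' y), norm_nonneg (Qtail M y)]

lemma tendsto_Qtail (y : Hsp K) :
    Filter.Tendsto (fun M => Qtail M y) Filter.atTop (nhds 0) := by
  have h := (lp.hasSum_single (by norm_num : (2:ℝ≥0∞) ≠ ⊤) y).tendsto_sum_nat
  have h2 : Filter.Tendsto (fun M => y - ∑ i ∈ Finset.range M, lp.single 2 i (y i))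
      Filter.atTop (nhds (y - y)) := Filter.Tendsto.sub tendsto_const_nhds h
  simpa [Qtail, Ppart] using h2

lemma compact_tail (T : Hsp K →L[ℂ] Hsp K) (hc : IsCompactOperator T)
    {η : ℝ} (hη : 0 < η) : ∃ M : ℕ, ∀ z : Hsp K, ‖Qtail M (T z)‖ ≤ η * ‖z‖ := by
  obtain ⟨S, hScompact, hSnhds⟩ := hc
  obtain ⟨r, hr, hball⟩ := Metric.mem_nhds_iff.1 hSnhds
  set ε₀ : ℝ := η * r / 4 with hε₀def
  have hε₀ : 0 < ε₀ := by positivity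
  obtain ⟨t, htfin, htcover⟩ := Metric.totallyBounded_iff.1 hScompact.totallyBounded ε₀ hε₀
  have hev : ∀ᶠ M in Filter.atTop, ∀ y ∈ t, ‖Qtail M y‖ ≤ ε₀ := by
    rw [Filter.eventually_all_finite htfin]
    intro y _
    have h2 := (tendsto_Qtail (K := K) y).norm
    exact (h2.eventually_le_const (by simpa using hε₀)).mono fun M hM => by simpa using hM
  obtain ⟨M, hM⟩ := hev.exists
  refine ⟨M, fun z => ?_⟩
  rcases eq_or_ne z 0 with rfl | hz
  · have hq : Qtail M (0 : Hsp K) = 0 := by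
      apply lp.ext
      funext j
      rw [Qtail_apply]
      by_cases h : j < M <;> simp [h, lp.coeFn_zero]
    simp [hq, map_zero]
  have hznorm : 0 < ‖z‖ := norm_pos_iff.2 hz
  set c : ℝ := r / (2 * ‖z‖) with hcdef
  have hc : 0 < c := by positivity
  set z' : Hsp K := ((c : ℂ)) • z with hz'def
  have hz'norm : ‖z'‖ = c * ‖z‖ := by
    rw [hz'def, norm_smul]; simp [abs_of_pos hc, Complex.norm_real]
  have hz'ball : z' ∈ Metric.ball (0 : Hsp K) r := by
    rw [Metric.mem_ball, dist_zero_right, hz'norm, hcdef]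
    rw [div_mul_eq_mul_div, mul_comm]
    rw [div_lt_iff₀ (by positivity)]
    nlinarith
  have hTz' : T z' ∈ S := hball hz'ball
  obtain ⟨y, hyt, hy⟩ := Set.mem_iUnion₂.1 (htcover hTz')
  have hdist : ‖T z' - y‖ < ε₀ := by
    rw [← dist_eq_norm]; exact Metric.mem_ball.1 hy
  have hQsub : Qtail M (T z') = Qtail M (T z' - y) + Qtail M y := by
    apply lp.ext; funext j
    have e1 : (Qtail M (T z' - y) + Qtail M y) j
        = (Qtail M (T z' - y)) j + (Qtail M y) j := by rw [lp.coeFn_add]; rfl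
    rw [Qtail_apply, e1, Qtail_apply, Qtail_apply]
    have e2 : (T z' - y) j = T z' j - y j := by rw [lp.coeFn_sub]; rfl
    by_cases h : j < M <;> simp [h, e2]
  have hbound : ‖Qtail M (T z')‖ ≤ 2 * ε₀ := by
    rw [hQsub]
    calc ‖Qtail M (T z' - y) + Qtail M y‖ ≤ ‖Qtail M (T z' - y)‖ + ‖Qtail M y‖ :=
          norm_add_le _ _
      _ ≤ ‖T z' - y‖ + ε₀ := add_le_add (norm_Qtail_le _ _) (hM y hyt)
      _ ≤ 2 * ε₀ := by linarith
  have hsmul : Qtail M (T z') = ((c:ℂ)) • Qtail M (T z) := by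
    rw [hz'def, map_smul, Qtail_smul]
  rw [hsmul, norm_smul] at hbound
  have hbound2 : c * ‖Qtail M (T z)‖ ≤ 2 * ε₀ := by
    have habs : ‖(c:ℂ)‖ = c := by simp [abs_of_pos hc, Complex.norm_real]
    rwa [habs] at hbound
  have hle : ‖Qtail M (T z)‖ ≤ (2 * ε₀) / c := by
    rw [le_div_iff₀ hc]; linarith
  calc ‖Qtail M (T z)‖ ≤ (2 * ε₀) / c := hle
    _ = η * ‖z‖ := by rw [hε₀def, hcdef]; field_simp; ring

lemma norm_sq_eq_sum_range {N : ℕ} (y : Hsp K) (hy : ∀ j, N ≤ j → y j = 0) :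
    ‖y‖ ^ 2 = ∑ i ∈ Finset.range N, ‖y i‖ ^ 2 := by
  refine ((hasSum_norm_sq y).unique (hasSum_sum_of_ne_finset_zero fun j hj => ?_))
  have hNj : N ≤ j := by by_contra h; exact hj (Finset.mem_range.2 (by omega))
  rw [hy j hNj]; simp

lemma tendsto_slope_exp (γ : ℝ) (t : ℕ → ℝ) (ht0 : ∀ k, 0 < t k)
    (htlim : Filter.Tendsto t Filter.atTop (nhds 0)) :
    Filter.Tendsto (fun k => (Real.exp (γ * t k) - 1) / t k) Filter.atTop (nhds γ) := by
  have hderiv : HasDerivAt (fun s : ℝ => Real.exp (γ * s)) γ 0 := by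
    have h1 : HasDerivAt (fun s : ℝ => γ * s) γ 0 := by
      simpa using (hasDerivAt_id (0:ℝ)).const_mul γ
    have h2 := (Real.hasDerivAt_exp (γ * 0)).comp 0 h1
    simpa [Function.comp_def] using h2
  have hslope := hasDerivAt_iff_tendsto_slope.1 hderiv
  have htne : Filter.Tendsto t Filter.atTop (nhdsWithin 0 {x : ℝ | x ≠ 0}) := by
    rw [tendsto_nhdsWithin_iff]
    exact ⟨htlim, Filter.Eventually.of_forall fun k => (ht0 k).ne'⟩
  have h3 := hslope.comp htne
  refine h3.congr fun k => ?_
  simp [slope_def_field, Real.exp_zero]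

lemma quad_bound {α D E X : ℝ} (hα : 0 < α) (hD : 0 ≤ D) (hE : 0 ≤ E) (hX : 0 ≤ X)
    (h : α * X ^ 2 ≤ D + E * X) : X ≤ E / α + Real.sqrt (D / α) := by
  by_contra hlt
  push_neg at hlt
  set s := Real.sqrt (D / α) with hs
  have hsnn : 0 ≤ s := Real.sqrt_nonneg _
  have hs2 : s ^ 2 = D / α := Real.sq_sqrt (div_nonneg hD hα.le)
  have hDs : D = α * s ^ 2 := by rw [hs2]; field_simp
  have hXgs : s < X := lt_of_le_of_lt (le_add_of_nonneg_left (div_nonneg hE hα.le)) hlt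
  have hXpos : 0 < X := lt_of_le_of_lt (by positivity) hlt
  have hlt2 : E + α * s < α * X := by
    have h2 := mul_lt_mul_of_pos_left hlt hα
    rw [mul_add, mul_div_cancel₀ _ hα.ne'] at h2
    linarith
  nlinarith [mul_lt_mul_of_pos_right hlt2 hXpos,
    mul_le_mul_of_nonneg_left hXgs.le (mul_nonneg hα.le hsnn)]

end Aux

/-- **Corollary 3.4(b).** Eigenvector decay when `‖A_k‖ → ∞`. -/
theorem eigenvector_decay_norm_tendsto_atTop
    (A B : ℕ → K →L[ℂ] K) (hB : ∀ n, IsSelfAdjoint (B n))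
    (hkerA : ∀ m, ∀ x : K, A m x = 0 → x = 0)
    (J : lp (fun _ : ℕ => K) 2 →ₗ.[ℂ] lp (fun _ : ℕ => K) 2)
    (hJ : IsBlockJacobi J A B) (hsa : IsSelfAdjoint J)
    (hbelow : IsBoundedBelowOp J)
    (hA : Filter.Tendsto (fun k => ‖A k‖) Filter.atTop Filter.atTop)
    (b : ℝ) (hess : EssSpecFrom J b)
    (ε : ℝ) (hε : ε ∈ Set.Ioo (0 : ℝ) 1)
    (lam : ℝ) (hlam : lam < b)
    (u : J.domain) (hu : J u = (lam : ℂ) • (u : lp (fun _ : ℕ => K) 2))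
    (hnorm : ‖(u : lp (fun _ : ℕ => K) 2)‖ = 1) :
    ∃ C : ℝ, ∀ m : ℕ,
      ‖(u : lp (fun _ : ℕ => K) 2) m‖ ≤
        C * Real.exp (-((1 - ε) * Real.sqrt (b - lam)) *
            ∑ k ∈ Finset.range m, 1 / Real.sqrt ‖A k‖) := by
  classical
  obtain ⟨K₀, hK₀c, hK₀sa, hK₀⟩ := hess
  obtain ⟨hε0, hε1⟩ := hε
  set uf : ℕ → K := fun m => (u : Hsp K) m with hufdef
  -- eigenvector equation componentwise
  have eig : ∀ n, jacApply A B uf n = (lam : ℂ) • uf n := by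
    intro n
    have h1 := jac_component hJ u n
    rw [hu] at h1
    rw [← h1, lp.coeFn_smul]
    rfl
  have hufle : ∀ m, ‖uf m‖ ≤ 1 := fun m => by
    simpa [hnorm] using lp.norm_apply_le_norm two_ne_zero (u : Hsp K) m
  have husq : HasSum (fun k => ‖uf k‖ ^ 2) 1 := by
    simpa [hnorm] using hasSum_norm_sq (u : Hsp K)
  have hune : (u : Hsp K) ≠ 0 := by
    intro h
    rw [h] at hnorm
    simp at hnorm
  have ha : ∀ k, 0 < ‖A k‖ := by
    intro k
    rw [norm_pos_iff]
    intro hAk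
    apply hune
    have hz : ∀ x : K, x = 0 := fun x => hkerA k x (by rw [hAk]; rfl)
    apply lp.ext
    funext j
    rw [lp.coeFn_zero]
    exact hz _
  set t : ℕ → ℝ := fun k => 1 / Real.sqrt ‖A k‖ with htdef
  have ht : ∀ k, 0 < t k := fun k => by
    have := Real.sqrt_pos.2 (ha k)
    positivity
  have htsq : ∀ k, ‖A k‖ = 1 / t k ^ 2 := fun k => by
    rw [htdef]
    simp only [div_pow, one_pow, Real.sq_sqrt (ha k).le]
    rw [one_div_one_div]
  set S : ℕ → ℝ := fun m => ∑ k ∈ Finset.range m, t k with hSdef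
  have hSmono : Monotone S := by
    intro i j hij
    exact Finset.sum_le_sum_of_subset_of_nonneg (Finset.range_subset_range.2 hij)
      (fun k _ _ => (ht k).le)
  have hbl : 0 < b - lam := sub_pos.2 hlam
  set γ : ℝ := (1 - ε) * Real.sqrt (b - lam) with hγdef
  have hγ : 0 < γ := mul_pos (by linarith) (Real.sqrt_pos.2 hbl)
  have hγsq : γ ^ 2 < b - lam := by
    rw [hγdef, mul_pow, Real.sq_sqrt hbl.le]
    have h1 : (1 - ε) ^ 2 < 1 := by nlinarith
    nlinarith [mul_lt_mul_of_pos_right h1 hbl]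
  set c : ℝ := (b - lam) - γ ^ 2 with hcdef
  have hc : 0 < c := by rw [hcdef]; linarith
  -- choice of M
  have htlim : Filter.Tendsto t Filter.atTop (nhds 0) := by
    have h1 : Filter.Tendsto (fun k => Real.sqrt ‖A k‖) Filter.atTop Filter.atTop := by
      have h2 : Filter.Tendsto (fun x : ℝ => x ^ (1/2 : ℝ)) Filter.atTop Filter.atTop :=
        tendsto_rpow_atTop (by norm_num)
      have h3 := h2.comp hA
      refine h3.congr fun k => ?_
      simp only [Function.comp_apply]
      exact (Real.sqrt_eq_rpow _).symm
    have h4 := tendsto_inv_atTop_zero.comp h1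
    refine h4.congr fun k => ?_
    simp [htdef, one_div]
  have hslope2 : Filter.Tendsto (fun k => ((Real.exp (γ * t k) - 1) / t k) ^ 2)
      Filter.atTop (nhds (γ ^ 2)) := (tendsto_slope_exp γ t ht htlim).pow 2
  have hev1 : ∀ᶠ k in Filter.atTop, ((Real.exp (γ * t k) - 1) / t k) ^ 2 ≤ γ ^ 2 + c / 3 :=
    hslope2.eventually (eventually_le_nhds (by linarith))
  obtain ⟨M₁, hM₁⟩ := Filter.eventually_atTop.1 hev1
  obtain ⟨M₂, hM₂⟩ := compact_tail K₀ hK₀c (show (0:ℝ) < c / 3 by linarith)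
  set M : ℕ := max M₁ M₂ with hMdef
  have hM₂' : ∀ z : Hsp K, ‖Qtail M (K₀ z)‖ ≤ c / 3 * ‖z‖ := fun z =>
    le_trans (norm_Qtail_mono (le_max_right _ _) _) (hM₂ z)
  set Pb : ℝ := Real.exp (γ * S M) with hPbdef
  have hPb1 : 1 ≤ Pb := by
    rw [hPbdef, show (1:ℝ) = Real.exp 0 by simp]
    apply Real.exp_le_exp.2
    have : 0 ≤ S M := Finset.sum_nonneg fun k _ => (ht k).le
    positivity
  have hPb0 : 0 < Pb := Real.exp_pos _
  set EE : ℝ := ‖K₀‖ * Pb with hEEdef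
  have hEE0 : 0 ≤ EE := mul_nonneg (norm_nonneg _) hPb0.le
  set D : ℝ := ∑ k ∈ Finset.range M, Pb ^ 2 * ((Real.exp (γ * t k) - 1) ^ 2 * ‖A k‖)
    with hDdef
  have hD0 : 0 ≤ D := Finset.sum_nonneg fun k _ => by positivity
  set R : ℝ := EE / (c/3) + Real.sqrt (D / (c/3)) with hRdef
  -- the key estimate, for every truncation level N
  have key : ∀ N : ℕ, Real.exp (γ * S N) * ‖uf N‖ ≤ R := by
    intro N
    set w : ℕ → ℝ := fun m => Real.exp (γ * S (min m N)) with hwdef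
    have hw0 : ∀ m, 0 < w m := fun m => Real.exp_pos _
    have hwconst : ∀ m, N ≤ m → w m = w N := by
      intro m hm
      rw [hwdef]
      simp only [min_eq_right hm, min_self]
    have hwmono : Monotone w := by
      intro i j hij
      exact Real.exp_le_exp.2 (mul_le_mul_of_nonneg_left
        (hSmono (min_le_min_right N hij)) hγ.le)
    have hwlt : ∀ k, k ≤ N → w k = Real.exp (γ * S k) := by
      intro k hk
      rw [hwdef]
      simp only [min_eq_left hk]
    -- the weighted vector
    set g : Hsp K := ∑ i ∈ Finset.range N, lp.single 2 i (((w i - w N : ℝ) : ℂ) • uf i)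
      with hgdef
    set v : Hsp K := ((w N : ℝ) : ℂ) • (u : Hsp K) + g with hvdef
    have hva : ∀ m, v m = ((w m : ℝ) : ℂ) • uf m := by
      intro m
      have h1 : v m = (((w N : ℝ) : ℂ) • (u : Hsp K)) m + g m := by
        rw [hvdef, lp.coeFn_add]; rfl
      have h2 : (((w N : ℝ) : ℂ) • (u : Hsp K)) m = ((w N : ℝ) : ℂ) • uf m := by
        rw [lp.coeFn_smul]; rfl
      rw [h1, h2, hgdef, sum_single_apply]
      by_cases hm : m < N
      · rw [if_pos hm, ← add_smul]
        congr 1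
        push_cast
        ring
      · rw [if_neg hm, add_zero, hwconst m (le_of_not_gt hm)]
    have hgfin : IsFinSupp g := by
      apply Set.Finite.subset (Finset.range N).finite_toSet
      intro n hn
      simp only [Set.mem_setOf_eq] at hn
      by_contra hnN
      apply hn
      rw [hgdef, sum_single_apply, if_neg (fun h => hnN (Finset.mem_coe.2 (Finset.mem_range.2 h)))]
    have hvdom : v ∈ J.domain :=
      J.domain.add_mem (J.domain.smul_mem _ u.2) (hJ.dom_fin g hgfin)
    set d : J.domain := ⟨v, hvdom⟩ with hddef
    set X : Hsp K := J d - (lam : ℂ) • v with hXdef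
    have hvj : ∀ j, ‖v j‖ = w j * ‖uf j‖ := fun j => by
      rw [hva, norm_smul]
      simp [Complex.norm_real, abs_of_pos (hw0 j)]
    -- components of X
    have hXa : ∀ n, X n = jacF A uf w n := by
      intro n
      have h1 : X n = (J d) n - (lam : ℂ) • v n := by
        rw [hXdef, lp.coeFn_sub]
        rw [lp.coeFn_smul]; rfl
      rw [h1, jac_component hJ d n]
      have hdv : ∀ m, (d : Hsp K) m = v m := fun m => rfl
      cases n with
      | zero =>
        simp only [jacApply, jacF, hdv]
        rw [hva 0, hva 1, map_smul, map_smul]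
        have e0 := eig 0
        simp only [jacApply] at e0
        have e0' : B 0 (uf 0) = (lam : ℂ) • uf 0 - A 0 (uf 1) := by
          rw [← e0]; abel
        rw [e0']
        push_cast
        module
      | succ k =>
        simp only [jacApply, jacF, hdv]
        rw [hva k, hva (k+1), hva (k+2), map_smul, map_smul, map_smul]
        have e1 := eig (k+1)
        simp only [jacApply] at e1
        have e1' : B (k+1) (uf (k+1)) = (lam : ℂ) • uf (k+1)
            - ContinuousLinearMap.adjoint (A k) (uf k) - A (k+1) (uf (k+2)) := by
          rw [← e1]; abel
        rw [e1']
        push_cast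
        module
    have hjacF0 : ∀ n, N + 1 ≤ n → jacF A uf w n = 0 := by
      intro n hn
      match n, hn with
      | (k+1), hn =>
        have hk : N ≤ k := by omega
        simp only [jacF]
        rw [hwconst k hk, hwconst (k+1) (by omega), hwconst (k+2) (by omega)]
        simp
    -- the quadratic form identity
    have hres : HasSum (fun n => (⟪jacF A uf w n, ((w n : ℝ) : ℂ) • uf n⟫_ℂ).re)
        ((⟪X, v⟫_ℂ).re) := by
      have h1 := lp.hasSum_inner (𝕜 := ℂ) X v
      have h2 : (fun n => ⟪X n, v n⟫_ℂ) = fun n => ⟪jacF A uf w n, ((w n : ℝ) : ℂ) • uf n⟫_ℂ := by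
        funext n
        rw [hXa n, hva n]
      rw [h2] at h1
      exact Complex.reCLM.hasSum h1
    have hinner : (⟪X, v⟫_ℂ).re
        = -(∑ k ∈ Finset.range N,
            (w (k+1) - w k) ^ 2 * (⟪A k (uf (k+1)), uf k⟫_ℂ).re) := by
      have h1 : (⟪X, v⟫_ℂ).re = ∑ n ∈ Finset.range (N+1),
          (⟪jacF A uf w n, ((w n : ℝ) : ℂ) • uf n⟫_ℂ).re := by
        refine hres.unique (hasSum_sum_of_ne_finset_zero fun n hn => ?_)
        have hNn : N + 1 ≤ n := by
          by_contra h
          exact hn (Finset.mem_range.2 (by omega))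
        rw [hjacF0 n hNn]
        simp
      rw [h1, key_identity A uf w N, hwconst (N+1) (by omega)]
      ring
    -- lower bound for the quadratic form
    have hKd := hK₀ d
    have hsplit : (⟪X, v⟫_ℂ).re
        = (⟪J d - K₀ v, v⟫_ℂ).re + (⟪K₀ v, v⟫_ℂ).re - lam * ‖v‖ ^ 2 := by
      rw [hXdef]
      rw [inner_sub_left, inner_sub_left]
      have h1 : ⟪(lam : ℂ) • v, v⟫_ℂ = (lam : ℂ) * ⟪v, v⟫_ℂ := by
        rw [inner_smul_left]
        simp [Complex.conj_ofReal]
      rw [h1]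
      have h2 : ((lam : ℂ) * ⟪v, v⟫_ℂ).re = lam * ‖v‖ ^ 2 := by
        rw [Complex.re_ofReal_mul]
        congr 1
        simpa using inner_self_eq_norm_sq (𝕜 := ℂ) v
      simp only [Complex.sub_re]
      rw [h2]
      ring
    -- bound on re⟪K₀ v, v⟫
    have hPv : ‖Ppart M v‖ ≤ Pb := by
      have h1 : ‖Ppart M v‖ ^ 2 = ∑ i ∈ Finset.range M, ‖(Ppart M v) i‖ ^ 2 := by
        apply norm_sq_eq_sum_range
        intro j hj
        rw [Ppart_apply, if_neg (by omega)]
      have h2 : ∀ i ∈ Finset.range M, ‖(Ppart M v) i‖ ^ 2 ≤ Pb ^ 2 * ‖uf i‖ ^ 2 := by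
        intro i hi
        have hiM := Finset.mem_range.1 hi
        rw [Ppart_apply, if_pos hiM, hvj i]
        have hwi : w i ≤ Pb := by
          rw [hPbdef, hwdef]
          apply Real.exp_le_exp.2
          exact mul_le_mul_of_nonneg_left (hSmono (le_trans (min_le_left i N) hiM.le)) hγ.le
        rw [mul_pow]
        exact mul_le_mul_of_nonneg_right (pow_le_pow_left₀ (hw0 i).le hwi 2) (sq_nonneg _)
      have h3 : ‖Ppart M v‖ ^ 2 ≤ Pb ^ 2 := by
        rw [h1]
        calc ∑ i ∈ Finset.range M, ‖(Ppart M v) i‖ ^ 2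
            ≤ ∑ i ∈ Finset.range M, Pb ^ 2 * ‖uf i‖ ^ 2 := Finset.sum_le_sum h2
          _ = Pb ^ 2 * ∑ i ∈ Finset.range M, ‖uf i‖ ^ 2 := by rw [Finset.mul_sum]
          _ ≤ Pb ^ 2 * 1 := by
              apply mul_le_mul_of_nonneg_left _ (by positivity)
              exact sum_le_hasSum _ (fun i _ => sq_nonneg _) husq
          _ = Pb ^ 2 := mul_one _
      nlinarith [norm_nonneg (Ppart M v)]
    have hK0v : -(EE * ‖v‖) - c / 3 * ‖v‖ ^ 2 ≤ (⟪K₀ v, v⟫_ℂ).re := by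
      have hsplitv : (⟪K₀ v, v⟫_ℂ) = ⟪K₀ (Ppart M v), v⟫_ℂ + ⟪K₀ (Qtail M v), v⟫_ℂ := by
        rw [← inner_add_left, ← map_add, Ppart_add_Qtail]
      have hb1 : |(⟪K₀ (Ppart M v), v⟫_ℂ).re| ≤ EE * ‖v‖ := by
        refine (Complex.abs_re_le_norm _).trans ?_
        refine (norm_inner_le_norm _ _).trans ?_
        have h4 : ‖K₀ (Ppart M v)‖ ≤ ‖K₀‖ * Pb :=
          le_trans (K₀.le_opNorm _) (mul_le_mul_of_nonneg_left hPv (norm_nonneg _))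
        rw [hEEdef]
        exact mul_le_mul_of_nonneg_right h4 (norm_nonneg _)
      have hb2 : |(⟪K₀ (Qtail M v), v⟫_ℂ).re| ≤ c / 3 * ‖v‖ ^ 2 := by
        have hsa : ⟪K₀ (Qtail M v), v⟫_ℂ = ⟪Qtail M v, K₀ v⟫_ℂ := by
          have hadj : ContinuousLinearMap.adjoint K₀ = K₀ :=
            ContinuousLinearMap.isSelfAdjoint_iff'.1 hK₀sa
          conv_lhs => rw [← hadj]
          exact ContinuousLinearMap.adjoint_inner_left _ _ _
        have hsplit2 : ⟪Qtail M v, K₀ v⟫_ℂ = ⟪Qtail M v, Qtail M (K₀ v)⟫_ℂ := by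
          have h5 : ⟪Qtail M v, Ppart M (K₀ v)⟫_ℂ = 0 := by
            rw [lp.inner_eq_tsum]
            have hz : ∀ j, ⟪(Qtail M v) j, (Ppart M (K₀ v)) j⟫_ℂ = 0 := by
              intro j
              by_cases hj : j < M
              · rw [Qtail_apply, if_pos hj, inner_zero_left]
              · rw [Ppart_apply, if_neg hj, inner_zero_right]
            simp only [hz, tsum_zero]
          conv_lhs => rw [← Ppart_add_Qtail M (K₀ v)]
          rw [inner_add_right, h5, zero_add]
        rw [hsa, hsplit2]
        refine (Complex.abs_re_le_norm _).trans ?_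
        refine (norm_inner_le_norm _ _).trans ?_
        have h6 : ‖Qtail M v‖ ≤ ‖v‖ := norm_Qtail_le _ _
        have h7 : ‖Qtail M (K₀ v)‖ ≤ c / 3 * ‖v‖ := hM₂' v
        calc ‖Qtail M v‖ * ‖Qtail M (K₀ v)‖ ≤ ‖v‖ * (c / 3 * ‖v‖) := by
              apply mul_le_mul h6 h7 (norm_nonneg _) (norm_nonneg _)
          _ = c / 3 * ‖v‖ ^ 2 := by ring
      have h8 := hsplitv
      have h9 : (⟪K₀ v, v⟫_ℂ).re
          = (⟪K₀ (Ppart M v), v⟫_ℂ).re + (⟪K₀ (Qtail M v), v⟫_ℂ).re := by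
        rw [h8, Complex.add_re]
      rw [h9]
      have := abs_le.1 hb1
      have := abs_le.1 hb2
      linarith [(abs_le.1 hb1).1, (abs_le.1 hb2).1]
    -- summability of components
    have hxsum : HasSum (fun j => ‖v j‖ ^ 2) (‖v‖ ^ 2) := hasSum_norm_sq v
    -- upper bound for the commutator sum
    have hΔ : ∀ k, k < N → w (k+1) - w k = Real.exp (γ * S k) * (Real.exp (γ * t k) - 1) := by
      intro k hk
      rw [hwlt k (by omega), hwlt (k+1) (by omega)]
      have h3 : S (k+1) = S k + t k := Finset.sum_range_succ _ _
      rw [h3, mul_add, Real.exp_add]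
      ring
    have hr : ∀ k, -((w (k+1) - w k) ^ 2 * (⟪A k (uf (k+1)), uf k⟫_ℂ).re)
        ≤ (w (k+1) - w k) ^ 2 * (‖A k‖ * (‖uf (k+1)‖ * ‖uf k‖)) := by
      intro k
      have h1 : |(⟪A k (uf (k+1)), uf k⟫_ℂ).re| ≤ ‖A k‖ * (‖uf (k+1)‖ * ‖uf k‖) := by
        refine (Complex.abs_re_le_norm _).trans ?_
        refine (norm_inner_le_norm _ _).trans ?_
        rw [← mul_assoc]
        exact mul_le_mul_of_nonneg_right (ContinuousLinearMap.le_opNorm _ _) (norm_nonneg _)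
      have h2 := (abs_le.1 h1).1
      nlinarith [sq_nonneg (w (k+1) - w k)]
    have hupper : (⟪X, v⟫_ℂ).re ≤ D + (γ ^ 2 + c / 3) * ‖v‖ ^ 2 := by
      rw [hinner]
      have hbound : ∀ k ∈ Finset.range N,
          -((w (k+1) - w k) ^ 2 * (⟪A k (uf (k+1)), uf k⟫_ℂ).re)
          ≤ (if k < M then Pb ^ 2 * ((Real.exp (γ * t k) - 1) ^ 2 * ‖A k‖)
             else (γ ^ 2 + c / 3) * ((‖v k‖ ^ 2 + ‖v (k+1)‖ ^ 2) / 2)) := by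
        intro k hk
        have hkN := Finset.mem_range.1 hk
        refine (hr k).trans ?_
        by_cases hkM : k < M
        · rw [if_pos hkM, hΔ k hkN]
          have hE : Real.exp (γ * S k) ≤ Pb := by
            rw [hPbdef]
            exact Real.exp_le_exp.2 (mul_le_mul_of_nonneg_left (hSmono hkM.le) hγ.le)
          have hn01 : ‖uf (k+1)‖ * ‖uf k‖ ≤ 1 :=
            mul_le_one₀ (hufle _) (norm_nonneg _) (hufle _)
          have hEpos : 0 < Real.exp (γ * S k) := Real.exp_pos _
          have hE2 : Real.exp (γ * S k) ^ 2 ≤ Pb ^ 2 := by nlinarith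
          calc (Real.exp (γ * S k) * (Real.exp (γ * t k) - 1)) ^ 2
                * (‖A k‖ * (‖uf (k+1)‖ * ‖uf k‖))
              ≤ (Real.exp (γ * S k) * (Real.exp (γ * t k) - 1)) ^ 2 * (‖A k‖ * 1) := by
                apply mul_le_mul_of_nonneg_left _ (by positivity)
                exact mul_le_mul_of_nonneg_left hn01 (ha k).le
            _ = Real.exp (γ * S k) ^ 2 * (Real.exp (γ * t k) - 1) ^ 2 * ‖A k‖ := by
                rw [mul_one, mul_pow]
            _ ≤ Pb ^ 2 * (Real.exp (γ * t k) - 1) ^ 2 * ‖A k‖ := by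
                apply mul_le_mul_of_nonneg_right _ (ha k).le
                exact mul_le_mul_of_nonneg_right hE2 (by positivity)
            _ = Pb ^ 2 * ((Real.exp (γ * t k) - 1) ^ 2 * ‖A k‖) := by ring
        · rw [if_neg hkM, hΔ k hkN, hvj k, hvj (k+1)]
          have hkM1 : M₁ ≤ k := le_trans (le_max_left _ _) (le_of_not_gt hkM)
          have hQt := hM₁ k hkM1
          have hwk : w k = Real.exp (γ * S k) := hwlt k (by omega)
          have hwk1 : w k ≤ w (k+1) := hwmono (Nat.le_succ k)
          have htk := ht k
          have hQP : (Real.exp (γ * S k) * (Real.exp (γ * t k) - 1)) ^ 2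
                * (‖A k‖ * (‖uf (k+1)‖ * ‖uf k‖))
              = ((Real.exp (γ * t k) - 1) / t k) ^ 2
                * ((Real.exp (γ * S k) * ‖uf k‖) * (Real.exp (γ * S k) * ‖uf (k+1)‖)) := by
            rw [htsq k]
            field_simp
          rw [hQP]
          have hstep1 : (Real.exp (γ * S k) * ‖uf k‖) * (Real.exp (γ * S k) * ‖uf (k+1)‖)
              ≤ (w k * ‖uf k‖) * (w (k+1) * ‖uf (k+1)‖) := by
            rw [← hwk]
            apply mul_le_mul_of_nonneg_left _ (by positivity)
            exact mul_le_mul_of_nonneg_right hwk1 (norm_nonneg _)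
          have hstep2 : (w k * ‖uf k‖) * (w (k+1) * ‖uf (k+1)‖)
              ≤ ((w k * ‖uf k‖) ^ 2 + (w (k+1) * ‖uf (k+1)‖) ^ 2) / 2 := by
            nlinarith [sq_nonneg (w k * ‖uf k‖ - w (k+1) * ‖uf (k+1)‖)]
          have hq0 : (0:ℝ) ≤ γ ^ 2 + c / 3 := by positivity
          exact mul_le_mul hQt (hstep1.trans hstep2) (by positivity) hq0
      calc -(∑ k ∈ Finset.range N, (w (k+1) - w k) ^ 2 * (⟪A k (uf (k+1)), uf k⟫_ℂ).re)
          = ∑ k ∈ Finset.range N,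
              -((w (k+1) - w k) ^ 2 * (⟪A k (uf (k+1)), uf k⟫_ℂ).re) := by
            rw [Finset.sum_neg_distrib]
        _ ≤ ∑ k ∈ Finset.range N,
              (if k < M then Pb ^ 2 * ((Real.exp (γ * t k) - 1) ^ 2 * ‖A k‖)
               else (γ ^ 2 + c / 3) * ((‖v k‖ ^ 2 + ‖v (k+1)‖ ^ 2) / 2)) :=
            Finset.sum_le_sum hbound
        _ = (∑ k ∈ (Finset.range N).filter (fun k => k < M),
              Pb ^ 2 * ((Real.exp (γ * t k) - 1) ^ 2 * ‖A k‖))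
            + ∑ k ∈ (Finset.range N).filter (fun k => ¬ k < M),
              (γ ^ 2 + c / 3) * ((‖v k‖ ^ 2 + ‖v (k+1)‖ ^ 2) / 2) := Finset.sum_ite _ _
        _ ≤ D + (γ ^ 2 + c / 3) * ‖v‖ ^ 2 := by
            have hp1 : (∑ k ∈ (Finset.range N).filter (fun k => k < M),
                Pb ^ 2 * ((Real.exp (γ * t k) - 1) ^ 2 * ‖A k‖)) ≤ D := by
              rw [hDdef]
              apply Finset.sum_le_sum_of_subset_of_nonneg
              · intro x hx
                exact Finset.mem_range.2 (Finset.mem_filter.1 hx).2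
              · intro i _ _
                positivity
            have hp2 : (∑ k ∈ (Finset.range N).filter (fun k => ¬ k < M),
                (γ ^ 2 + c / 3) * ((‖v k‖ ^ 2 + ‖v (k+1)‖ ^ 2) / 2))
                ≤ (γ ^ 2 + c / 3) * ‖v‖ ^ 2 := by
              set s := (Finset.range N).filter (fun k => ¬ k < M) with hsdef
              have hs1 : ∑ k ∈ s, ‖v k‖ ^ 2 ≤ ‖v‖ ^ 2 :=
                sum_le_hasSum s (fun i _ => sq_nonneg _) hxsum
              have hs2 : ∑ k ∈ s, ‖v (k+1)‖ ^ 2 ≤ ‖v‖ ^ 2 := by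
                have himg : ∑ k ∈ s, ‖v (k+1)‖ ^ 2
                    = ∑ j ∈ s.image (fun k => k + 1), ‖v j‖ ^ 2 := by
                  rw [Finset.sum_image]
                  intro a _ b _ hab
                  simp only at hab
                  omega
                rw [himg]
                exact sum_le_hasSum _ (fun i _ => sq_nonneg _) hxsum
              have hq0 : (0:ℝ) ≤ γ ^ 2 + c / 3 := by positivity
              calc ∑ k ∈ s, (γ ^ 2 + c / 3) * ((‖v k‖ ^ 2 + ‖v (k+1)‖ ^ 2) / 2)
                  = (γ ^ 2 + c / 3) / 2 * ((∑ k ∈ s, ‖v k‖ ^ 2) + ∑ k ∈ s, ‖v (k+1)‖ ^ 2) := by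
                    rw [← Finset.sum_add_distrib, Finset.mul_sum]
                    apply Finset.sum_congr rfl
                    intro k _
                    ring
                _ ≤ (γ ^ 2 + c / 3) / 2 * (‖v‖ ^ 2 + ‖v‖ ^ 2) := by
                    apply mul_le_mul_of_nonneg_left _ (by positivity)
                    exact add_le_add hs1 hs2
                _ = (γ ^ 2 + c / 3) * ‖v‖ ^ 2 := by ring
            linarith
    -- combine
    have hfinal : c / 3 * ‖v‖ ^ 2 ≤ D + EE * ‖v‖ := by
      have hlow : (b - lam) * ‖v‖ ^ 2 - EE * ‖v‖ - c / 3 * ‖v‖ ^ 2 ≤ (⟪X, v⟫_ℂ).re := by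
        rw [hsplit]
        have h1 : b * ‖v‖ ^ 2 ≤ (⟪J d - K₀ v, v⟫_ℂ).re := hKd
        linarith [hK0v]
      have := hupper
      rw [hcdef] at *
      nlinarith [hlow]
    have hXR : ‖v‖ ≤ R := by
      rw [hRdef]
      exact quad_bound (by linarith) hD0 hEE0 (norm_nonneg v) hfinal
    -- conclude
    have h1 : ‖v N‖ ≤ ‖v‖ := lp.norm_apply_le_norm two_ne_zero v N
    rw [hvj N, hwlt N le_rfl] at h1
    linarith [h1.trans hXR]
  -- final conclusion
  refine ⟨R, fun m => ?_⟩
  have h1 := key m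
  have h4 : ‖(u : lp (fun _ : ℕ => K) 2) m‖ ≤ R * (Real.exp (γ * S m))⁻¹ := by
    rw [← div_eq_mul_inv, le_div_iff₀ (Real.exp_pos _)]
    calc ‖(u : lp (fun _ : ℕ => K) 2) m‖ * Real.exp (γ * S m)
        = Real.exp (γ * S m) * ‖uf m‖ := mul_comm _ _
      _ ≤ R := h1
  refine le_trans h4 (le_of_eq ?_)
  congr 1
  rw [← Real.exp_neg]
  congr 1
  simp only [hγdef, hSdef, htdef]
  ring
end
end

section
/- Lemma 5.1. Let s,t > 0 and let J_c be the bounded self-adjoint block Jacobi operator on H = ℓ²(ℕ,ℂ²) with constant entries A_n = [[0,1],[1,0]] and B_n = [[s,0],[0,t]], i.e. (J_c v)₁ = B v₁ + A v₂ and (J_c v)_k = A v_{k−1} + B v_k + A v_{k+1} for k ≥ 2, where A = [[0,1],[1,0]] and B = [[s,0],[0,t]]. Then for every v ∈ H: ⟨J_c v, v⟩ ≥ c‖v‖², where c = (st−4) / ((t+s)/2 + √(((t−s)/2)² + 4)). -/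
noncomputable section

open scoped InnerProductSpace ENNReal

/-- The continuous linear map on `ℂ² = EuclideanSpace ℂ (Fin 2)` induced by a `2×2` matrix. -/
def matCLM (M : Matrix (Fin 2) (Fin 2) ℂ) :
    EuclideanSpace ℂ (Fin 2) →L[ℂ] EuclideanSpace ℂ (Fin 2) :=
  LinearMap.toContinuousLinearMap (Matrix.toEuclideanLin M)

/-- The off-diagonal entry `A = [[0,1],[1,0]]`. -/
def matA : EuclideanSpace ℂ (Fin 2) →L[ℂ] EuclideanSpace ℂ (Fin 2) :=
  matCLM !![0, 1; 1, 0]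

/-- The diagonal entry `B = [[s,0],[0,t]]`. -/
def matB (s t : ℝ) : EuclideanSpace ℂ (Fin 2) →L[ℂ] EuclideanSpace ℂ (Fin 2) :=
  matCLM !![(s : ℂ), 0; 0, (t : ℂ)]

namespace BJaux

lemma conj_mul_re (z : ℂ) : ((starRingEnd ℂ) z * z).re = ‖z‖ ^ 2 := by
  rw [mul_comm, Complex.mul_conj, Complex.sq_norm]
  simp

lemma cross_symm (z w : ℂ) :
    ((starRingEnd ℂ) z * w).re = ((starRingEnd ℂ) w * z).re := by
  simp [Complex.mul_re]; ring

lemma norm_sq_two (u : EuclideanSpace ℂ (Fin 2)) : ‖u‖ ^ 2 = ‖u 0‖ ^ 2 + ‖u 1‖ ^ 2 := by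
  rw [← inner_self_eq_norm_sq (𝕜 := ℂ), PiLp.inner_apply, Fin.sum_univ_two]
  simp only [RCLike.inner_apply, RCLike.re_to_complex, Complex.add_re, conj_mul_re]
  simp only [Complex.mul_conj, Complex.ofReal_re, Complex.sq_norm]

lemma matA_apply0 (u : EuclideanSpace ℂ (Fin 2)) : matA u 0 = u 1 := by
  simp [matA, matCLM, Matrix.toEuclideanLin_apply, Matrix.mulVec, dotProduct,
    Fin.sum_univ_two, Matrix.vecHead, Matrix.vecTail]

lemma matA_apply1 (u : EuclideanSpace ℂ (Fin 2)) : matA u 1 = u 0 := by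
  simp [matA, matCLM, Matrix.toEuclideanLin_apply, Matrix.mulVec, dotProduct,
    Fin.sum_univ_two, Matrix.vecHead, Matrix.vecTail]

lemma matB_apply0 (s t : ℝ) (u : EuclideanSpace ℂ (Fin 2)) : matB s t u 0 = s * u 0 := by
  simp [matB, matCLM, Matrix.toEuclideanLin_apply, Matrix.mulVec, dotProduct,
    Fin.sum_univ_two, Matrix.vecHead, Matrix.vecTail]

lemma matB_apply1 (s t : ℝ) (u : EuclideanSpace ℂ (Fin 2)) : matB s t u 1 = t * u 1 := by
  simp [matB, matCLM, Matrix.toEuclideanLin_apply, Matrix.mulVec, dotProduct,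
    Fin.sum_univ_two, Matrix.vecHead, Matrix.vecTail]

lemma innerB_re (s t : ℝ) (u : EuclideanSpace ℂ (Fin 2)) :
    (⟪matB s t u, u⟫_ℂ).re = s * ‖u 0‖ ^ 2 + t * ‖u 1‖ ^ 2 := by
  rw [PiLp.inner_apply, Fin.sum_univ_two]
  simp only [RCLike.inner_apply, matB_apply0, matB_apply1, map_mul, Complex.conj_ofReal,
    RCLike.re_to_complex, Complex.add_re, mul_assoc, Complex.re_ofReal_mul, conj_mul_re]
  rw [mul_left_comm (u 0), mul_left_comm (u 1), Complex.mul_conj, Complex.mul_conj,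
    Complex.re_ofReal_mul, Complex.re_ofReal_mul, Complex.ofReal_re, Complex.ofReal_re,
    Complex.sq_norm, Complex.sq_norm]

lemma innerA_re (w u : EuclideanSpace ℂ (Fin 2)) :
    (⟪matA w, u⟫_ℂ).re
      = ((starRingEnd ℂ) (w 1) * u 0).re + ((starRingEnd ℂ) (w 0) * u 1).re := by
  rw [PiLp.inner_apply, Fin.sum_univ_two]
  simp only [RCLike.inner_apply, matA_apply0, matA_apply1, RCLike.re_to_complex, Complex.add_re]
  rw [mul_comm (u 0), mul_comm (u 1)]

lemma key_scalar (p q : ℝ) (hp : 0 < p) (hpq : p * q = 4) (a b : ℂ) :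
    0 ≤ p / 2 * ‖b‖ ^ 2 + q / 2 * ‖a‖ ^ 2 + 2 * ((starRingEnd ℂ) a * b).re := by
  have h1 : ‖a‖ ^ 2 = a.re ^ 2 + a.im ^ 2 := by
    rw [Complex.sq_norm, Complex.normSq_apply]; ring
  have h2 : ‖b‖ ^ 2 = b.re ^ 2 + b.im ^ 2 := by
    rw [Complex.sq_norm, Complex.normSq_apply]; ring
  have h3 : ((starRingEnd ℂ) a * b).re = a.re * b.re + a.im * b.im := by
    simp [Complex.mul_re]
  rw [h1, h2, h3]
  nlinarith [sq_nonneg (p * b.re + 2 * a.re), sq_nonneg (p * b.im + 2 * a.im), hp, hpq,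
    sq_nonneg a.re, sq_nonneg a.im]

lemma abs_cross_le (a b : ℂ) : |((starRingEnd ℂ) a * b).re| ≤ ‖a‖ * ‖b‖ := by
  calc |((starRingEnd ℂ) a * b).re| ≤ ‖(starRingEnd ℂ) a * b‖ :=
        Complex.abs_re_le_norm _
    _ = ‖a‖ * ‖b‖ := by
        rw [norm_mul, Complex.norm_conj]

end BJaux

set_option maxHeartbeats 1000000 in
open BJaux Filter Topology in
/-- **Lemma 5.1.** The block Jacobi operator `J_c` on `ℓ²(ℕ,ℂ²)` with constant entries
`A = [[0,1],[1,0]]`, `B = [[s,0],[0,t]]` (`s,t > 0`) satisfies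
`⟨J_c v, v⟩ ≥ (st−4)/((t+s)/2 + √(((t−s)/2)² + 4)) · ‖v‖²`. -/
theorem constant_block_jacobi_bounded_below (s t : ℝ) (hs : 0 < s) (ht : 0 < t)
    (Jc : lp (fun _ : ℕ => EuclideanSpace ℂ (Fin 2)) 2 →L[ℂ]
      lp (fun _ : ℕ => EuclideanSpace ℂ (Fin 2)) 2)
    (hsa : IsSelfAdjoint Jc)
    (h0 : ∀ v : lp (fun _ : ℕ => EuclideanSpace ℂ (Fin 2)) 2,
      (Jc v) 0 = matB s t (v 0) + matA (v 1))
    (hk : ∀ (v : lp (fun _ : ℕ => EuclideanSpace ℂ (Fin 2)) 2) (k : ℕ),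
      (Jc v) (k + 1) = matA (v k) + matB s t (v (k + 1)) + matA (v (k + 2))) :
    ∀ v : lp (fun _ : ℕ => EuclideanSpace ℂ (Fin 2)) 2,
      (s * t - 4) / ((t + s) / 2 + Real.sqrt (((t - s) / 2) ^ 2 + 4)) * ‖v‖ ^ 2 ≤
        (⟪Jc v, v⟫_ℂ).re := by
  intro v
  set D : ℝ := Real.sqrt (((t - s) / 2) ^ 2 + 4) with hD_def
  have hDsq : D ^ 2 = ((t - s) / 2) ^ 2 + 4 := Real.sq_sqrt (by positivity)
  have hDpos : 0 < D := Real.sqrt_pos.mpr (by positivity)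
  have hden : 0 < (t + s) / 2 + D := by positivity
  set c : ℝ := (s + t) / 2 - D with hc_def
  have hc : (s * t - 4) / ((t + s) / 2 + D) = c := by
    rw [div_eq_iff hden.ne']
    rw [hc_def]
    nlinarith [hDsq]
  set p : ℝ := s - c with hp_def
  set q : ℝ := t - c with hq_def
  have hp : 0 < p := by rw [hp_def, hc_def]; nlinarith [hDsq, hDpos]
  have hq : 0 < q := by rw [hq_def, hc_def]; nlinarith [hDsq, hDpos]
  have hpq : p * q = 4 := by rw [hp_def, hq_def, hc_def]; nlinarith [hDsq]
  set x : ℕ → ℂ := fun k => v k 0 with hx_def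
  set y : ℕ → ℂ := fun k => v k 1 with hy_def
  set f : ℕ → ℝ := fun k => (⟪(Jc v) k, v k⟫_ℂ).re with hf_def
  set g : ℕ → ℝ := fun k => ‖v k‖ ^ 2 with hg_def
  set cross : ℕ → ℝ := fun k =>
    ((starRingEnd ℂ) (y (k + 1)) * x k).re + ((starRingEnd ℂ) (x (k + 1)) * y k).re
    with hcross_def
  have hgk : ∀ k, g k = ‖x k‖ ^ 2 + ‖y k‖ ^ 2 := fun k => norm_sq_two (v k)
  have hf0 : f 0 = s * ‖x 0‖ ^ 2 + t * ‖y 0‖ ^ 2 + cross 0 := by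
    rw [hf_def, hcross_def]
    simp only [h0 v, inner_add_left, Complex.add_re, innerB_re, innerA_re, hx_def, hy_def]
  have hfk : ∀ k, f (k + 1)
      = cross k + (s * ‖x (k + 1)‖ ^ 2 + t * ‖y (k + 1)‖ ^ 2 + cross (k + 1)) := by
    intro k
    rw [hf_def, hcross_def]
    simp only [hk v k, inner_add_left, Complex.add_re, innerB_re, innerA_re, hx_def, hy_def]
    rw [cross_symm (v k 1) (v (k + 1) 0), cross_symm (v k 0) (v (k + 1) 1)]
    ring
  have key : ∀ k, 0 ≤ p / 2 * (‖x k‖ ^ 2 + ‖x (k + 1)‖ ^ 2)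
      + q / 2 * (‖y k‖ ^ 2 + ‖y (k + 1)‖ ^ 2) + 2 * cross k := by
    intro k
    have k1 := key_scalar p q hp hpq (y (k + 1)) (x k)
    have k2 := key_scalar q p hq (by rw [mul_comm]; exact hpq) (x (k + 1)) (y k)
    rw [hcross_def]
    simp only
    linarith [k1, k2]
  have claim : ∀ N, c * (∑ k ∈ Finset.range (N + 1), g k)
      + (cross N + (p / 2 * ‖x N‖ ^ 2 + q / 2 * ‖y N‖ ^ 2))
      ≤ ∑ k ∈ Finset.range (N + 1), f k := by
    intro N
    have hps : s = c + p := by rw [hp_def]; ring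
    have hqt : t = c + q := by rw [hq_def]; ring
    induction N with
    | zero =>
      rw [Finset.sum_range_one, Finset.sum_range_one, hf0, hgk 0, hps, hqt]
      have hx0 : 0 ≤ ‖x 0‖ ^ 2 := sq_nonneg _
      have hy0 : 0 ≤ ‖y 0‖ ^ 2 := sq_nonneg _
      nlinarith [mul_nonneg hp.le hx0, mul_nonneg hq.le hy0]
    | succ N ih =>
      rw [Finset.sum_range_succ, Finset.sum_range_succ (f := f), hfk N, hgk (N + 1), hps, hqt]
      linarith [ih, key N]
  have hfsum : HasSum f (⟪Jc v, v⟫_ℂ).re := by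
    rw [hf_def]
    exact Complex.hasSum_re (lp.hasSum_inner (Jc v) v)
  have hgsum : HasSum g (‖v‖ ^ 2) := by
    have h := Complex.hasSum_re (lp.hasSum_inner v v)
    have e1 : (fun k => (⟪v k, v k⟫_ℂ).re) = g := by
      funext k
      show (⟪v k, v k⟫_ℂ).re = ‖v k‖ ^ 2
      exact inner_self_eq_norm_sq (𝕜 := ℂ) (E := EuclideanSpace ℂ (Fin 2)) (v k)
    have e2 : (⟪v, v⟫_ℂ).re = ‖v‖ ^ 2 :=
      inner_self_eq_norm_sq (𝕜 := ℂ) (E := lp (fun _ : ℕ => EuclideanSpace ℂ (Fin 2)) 2) v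
    rw [e1, e2] at h
    exact h
  have hS : Tendsto (fun N => ∑ k ∈ Finset.range (N + 1), f k) atTop
      (𝓝 ((⟪Jc v, v⟫_ℂ).re)) :=
    hfsum.tendsto_sum_nat.comp (tendsto_add_atTop_nat 1)
  have hg0 : Tendsto g atTop (𝓝 0) := hgsum.summable.tendsto_atTop_zero
  have hg1 : Tendsto (fun N => g (N + 1)) atTop (𝓝 0) := hg0.comp (tendsto_add_atTop_nat 1)
  have hnx : Tendsto (fun N => ‖x N‖ ^ 2) atTop (𝓝 0) := by
    refine squeeze_zero (fun N => sq_nonneg _) (fun N => ?_) hg0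
    rw [hgk N]; nlinarith [sq_nonneg ‖y N‖]
  have hny : Tendsto (fun N => ‖y N‖ ^ 2) atTop (𝓝 0) := by
    refine squeeze_zero (fun N => sq_nonneg _) (fun N => ?_) hg0
    rw [hgk N]; nlinarith [sq_nonneg ‖x N‖]
  have hcross0 : Tendsto cross atTop (𝓝 0) := by
    refine squeeze_zero_norm (a := fun N => g N + g (N + 1)) (fun N => ?_) (by
      simpa using hg0.add hg1)
    simp only [hcross_def, Real.norm_eq_abs]
    have b1 := abs_cross_le (y (N + 1)) (x N)
    have b2 := abs_cross_le (x (N + 1)) (y N)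
    have habs := abs_add_le (((starRingEnd ℂ) (y (N + 1)) * x N).re)
      (((starRingEnd ℂ) (x (N + 1)) * y N).re)
    have e1 := hgk N
    have e2 := hgk (N + 1)
    nlinarith [sq_nonneg (‖y (N + 1)‖ - ‖x N‖), sq_nonneg (‖x (N + 1)‖ - ‖y N‖),
      norm_nonneg (x N), norm_nonneg (y N), norm_nonneg (x (N + 1)), norm_nonneg (y (N + 1))]
  have haux : Tendsto (fun N => cross N + (p / 2 * ‖x N‖ ^ 2 + q / 2 * ‖y N‖ ^ 2)) atTop
      (𝓝 0) := by
    have := hcross0.add ((hnx.const_mul (p / 2)).add (hny.const_mul (q / 2)))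
    simpa using this
  have hG : Tendsto (fun N => c * ∑ k ∈ Finset.range (N + 1), g k) atTop
      (𝓝 (c * ‖v‖ ^ 2)) :=
    ((hgsum.tendsto_sum_nat).comp (tendsto_add_atTop_nat 1)).const_mul c
  have final : c * ‖v‖ ^ 2 + 0 ≤ (⟪Jc v, v⟫_ℂ).re :=
    le_of_tendsto_of_tendsto' (hG.add haux) hS claim
  rw [hc]
  linarith [final]
end
end

section
/- Let δ > 0 and c > 0, define ψ(x) = x²e^x for x ≥ 0 and φ_δ(x) = 1/√δ for 0 ≤ x < δ and φ_δ(x) = 1/√x for x ≥ δ, and let γ ≥ 0 satisfy ψ(γ/√δ) = c/δ (i.e. γ = √δ·ψ⁻¹(c/δ)). Then for every ξ ≥ 0: ξ·ψ(γ·φ_δ(ξ)) ≤ c. -/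
noncomputable section

/-- If `δ, c > 0` and `γ ≥ 0` satisfies `ψ(γ/√δ) = c/δ`, then `ξ·ψ(γ·φ_δ(ξ)) ≤ c` for all
`ξ ≥ 0`. -/
theorem xi_mul_psi_gamma_phi_le (δ c γ : ℝ) (hδ : 0 < δ) (hc : 0 < c) (hγ : 0 ≤ γ)
    (hγδ : psiFun (γ / Real.sqrt δ) = c / δ) :
    ∀ ξ : ℝ, 0 ≤ ξ → ξ * psiFun (γ * phiFun δ ξ) ≤ c := by
  intro ξ hξ
  have hsδ : 0 < Real.sqrt δ := Real.sqrt_pos.mpr hδ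
  unfold phiFun
  split_ifs with h
  · -- ξ < δ
    have : γ * (1 / Real.sqrt δ) = γ / Real.sqrt δ := by ring
    rw [this, hγδ]
    calc ξ * (c / δ) ≤ δ * (c / δ) := by
          apply mul_le_mul_of_nonneg_right h.le (by positivity)
      _ = c := by field_simp
  · -- ξ ≥ δ
    push_neg at h
    have hξ0 : 0 < ξ := lt_of_lt_of_le hδ h
    have hsξ : 0 < Real.sqrt ξ := Real.sqrt_pos.mpr hξ0
    have key : ξ * psiFun (γ * (1 / Real.sqrt ξ)) = γ ^ 2 * Real.exp (γ / Real.sqrt ξ) := by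
      unfold psiFun
      have : Real.sqrt ξ ^ 2 = ξ := Real.sq_sqrt hξ0.le
      field_simp
      rw [this]; ring
    rw [key]
    have hle : γ / Real.sqrt ξ ≤ γ / Real.sqrt δ :=
      div_le_div_of_nonneg_left hγ hsδ (Real.sqrt_le_sqrt h)
    have : γ ^ 2 * Real.exp (γ / Real.sqrt ξ) ≤ γ ^ 2 * Real.exp (γ / Real.sqrt δ) := by
      apply mul_le_mul_of_nonneg_left (Real.exp_le_exp.mpr hle) (by positivity)
    refine this.trans ?_
    have hψ : (γ / Real.sqrt δ) ^ 2 * Real.exp (γ / Real.sqrt δ) = c / δ := hγδ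
    have hsq : (γ / Real.sqrt δ) ^ 2 = γ ^ 2 / δ := by
      rw [div_pow, Real.sq_sqrt hδ.le]
    rw [hsq] at hψ
    have : γ ^ 2 * Real.exp (γ / Real.sqrt δ) = δ * (c / δ) := by
      rw [← hψ]; field_simp; try ring
    rw [this]
    field_simp
    exact le_rfl
end
end

section
/- Let X be a bounded self-adjoint operator on a complex Hilbert space with X ≥ 0 (positive semidefinite). Then, in the Loewner (operator) order, 0 ≤ exp(X) − 2·I + exp(−X) ≤ X²·exp(X), where exp denotes the operator exponential and X²·exp(X) is self-adjoint since X commutes with exp(X). -/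
open scoped InnerProductSpace

lemma scalar_nonneg_aux (t : ℝ) : 0 ≤ Real.exp t - 2 + Real.exp (-t) := by
  nlinarith [Real.add_one_le_exp t, Real.add_one_le_exp (-t)]

lemma scalar_upper_aux (t : ℝ) (ht : 0 ≤ t) :
    Real.exp t - 2 + Real.exp (-t) ≤ t ^ 2 * Real.exp t := by
  have h1 : Real.exp t * Real.exp (-t) = 1 := by
    rw [← Real.exp_add]; simp
  have h2 : Real.exp (-t) ≤ 1 := Real.exp_le_one_iff.mpr (by linarith)
  have h3 : 1 - t ≤ Real.exp (-t) := by linarith [Real.add_one_le_exp (-t)]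
  have h4 : Real.exp t * Real.exp (-t) * Real.exp (-t) = Real.exp (-t) := by
    rw [h1, one_mul]
  have hP : 0 ≤ Real.exp t *
      ((t - (1 - Real.exp (-t))) * (t + (1 - Real.exp (-t)))) :=
    mul_nonneg (Real.exp_pos t).le
      (mul_nonneg (by linarith) (by linarith))
  nlinarith [hP, h1, h4]

/-- For a bounded self-adjoint positive operator `X` on a complex Hilbert space,
`0 ≤ exp(X) − 2·I + exp(−X) ≤ X²·exp(X)` in the Loewner order
(`S ≤ T` meaning `⟪(T−S)u,u⟫ ≥ 0` for all `u`). -/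
theorem exp_sub_two_add_exp_neg_loewner_bounds
    {H : Type*} [NormedAddCommGroup H] [InnerProductSpace ℂ H] [CompleteSpace H]
    (X : H →L[ℂ] H) (hX : IsSelfAdjoint X)
    (hpos : ∀ u : H, 0 ≤ (⟪X u, u⟫_ℂ).re) :
    (∀ u : H,
      0 ≤ (⟪((NormedSpace.exp X - 2 + NormedSpace.exp (-X) : H →L[ℂ] H)) u, u⟫_ℂ).re) ∧
    (∀ u : H,
      0 ≤ (⟪((X ^ 2 * NormedSpace.exp X -
          (NormedSpace.exp X - 2 + NormedSpace.exp (-X)) : H →L[ℂ] H)) u, u⟫_ℂ).re) := by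
  have hXpos : (0 : H →L[ℂ] H) ≤ X :=
    (ContinuousLinearMap.nonneg_iff_isPositive X).mpr ⟨hX.isSymmetric, fun u => hpos u⟩
  have hsp : ∀ t ∈ spectrum ℝ X, 0 ≤ t := fun t ht => spectrum_nonneg_of_nonneg hXpos ht
  have hexp : cfc Real.exp X = NormedSpace.exp X := by
    rw [CFC.real_exp_eq_normedSpace_exp hX]
  have hexpneg : cfc (fun t : ℝ => Real.exp (-t)) X = NormedSpace.exp (-X) := by
    rw [cfc_comp_neg Real.exp X, CFC.real_exp_eq_normedSpace_exp hX.neg]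
  have key1 : cfc (fun t : ℝ => Real.exp t - 2 + Real.exp (-t)) X
      = NormedSpace.exp X - 2 + NormedSpace.exp (-X) := by
    rw [cfc_add (a := X) (fun t : ℝ => Real.exp t - 2) (fun t : ℝ => Real.exp (-t)),
      cfc_sub (a := X) Real.exp (fun _ : ℝ => (2 : ℝ)), hexp, hexpneg, cfc_const 2 X]
    rw [map_ofNat]
  have key2 : cfc (fun t : ℝ => t ^ 2 * Real.exp t) X = X ^ 2 * NormedSpace.exp X := by
    rw [cfc_mul (fun t : ℝ => t ^ 2) Real.exp X, hexp, cfc_pow_id X 2]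
  have h1 : (0 : H →L[ℂ] H) ≤ NormedSpace.exp X - 2 + NormedSpace.exp (-X) :=
    key1 ▸ cfc_nonneg fun t _ => scalar_nonneg_aux t
  have h2 : NormedSpace.exp X - 2 + NormedSpace.exp (-X) ≤ X ^ 2 * NormedSpace.exp X := by
    rw [← key1, ← key2]
    exact cfc_mono fun t ht => scalar_upper_aux t (hsp t ht)
  constructor
  · exact fun u => ((ContinuousLinearMap.nonneg_iff_isPositive _).mp h1).re_inner_nonneg_left u
  · exact fun u => ((ContinuousLinearMap.le_def _ _).mp h2).re_inner_nonneg_left u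
end
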